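/- arXiv:1709.07286 — 12 statements merged into one kernel-verified Lean document; each statement's English description precedes it below -/
import Mathlib

section
/- Let V be a real Hilbert space, let x̄ ∈ V, let P : V → L(V) be continuously Fréchet differentiable near x̄ with P(x) an orthogonal projection (idempotent and self-adjoint bounded operator) for every x near x̄, and let S : V → V be continuously Fréchet differentiable near x̄ with P(x)(S(x) − x) = S(x) − x for all x near x̄ and S(x̄) = x̄. Then for every h ∈ V the Fréchet derivative satisfies S'(x̄)h = P(x̄)(S'(x̄)h) + (h − P(x̄)h). -/
open Filter Topology

/-- At a fixed point `xbar` of `S`, where `S x - x` always lies in the range of the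
orthogonal projection `P x`, the Fréchet derivative satisfies
`S'(xbar) h = P xbar (S'(xbar) h) + (h - P xbar h)`. -/
theorem stmt0
    {V : Type*} [NormedAddCommGroup V] [InnerProductSpace ℝ V] [CompleteSpace V]
    (xbar : V) (P : V → (V →L[ℝ] V)) (S : V → V)
    (hPproj : ∀ᶠ x in 𝓝 xbar, IsSelfAdjoint (P x) ∧ (P x).comp (P x) = P x)
    (hPdiff : ∀ᶠ x in 𝓝 xbar, ContDiffAt ℝ 1 P x)
    (hSdiff : ∀ᶠ x in 𝓝 xbar, ContDiffAt ℝ 1 S x)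
    (hrel : ∀ᶠ x in 𝓝 xbar, P x (S x - x) = S x - x)
    (hfix : S xbar = xbar) :
    ∀ h : V, fderiv ℝ S xbar h = P xbar (fderiv ℝ S xbar h) + (h - P xbar h) := by
  intro h
  have hP : HasFDerivAt P (fderiv ℝ P xbar) xbar :=
    (hPdiff.self_of_nhds.differentiableAt one_ne_zero).hasFDerivAt
  have hS : HasFDerivAt S (fderiv ℝ S xbar) xbar :=
    (hSdiff.self_of_nhds.differentiableAt one_ne_zero).hasFDerivAt
  have hf : HasFDerivAt (fun x => S x - x)
      (fderiv ℝ S xbar - ContinuousLinearMap.id ℝ V) xbar := hS.sub (hasFDerivAt_id xbar)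
  have hg : HasFDerivAt (fun x => P x (S x - x))
      ((P xbar).comp (fderiv ℝ S xbar - ContinuousLinearMap.id ℝ V) +
        (fderiv ℝ P xbar).flip (S xbar - xbar)) xbar := hP.clm_apply hf
  have heq : (fun x => P x (S x - x)) =ᶠ[𝓝 xbar] fun x => S x - x := hrel
  have hg' : HasFDerivAt (fun x => S x - x)
      ((P xbar).comp (fderiv ℝ S xbar - ContinuousLinearMap.id ℝ V) +
        (fderiv ℝ P xbar).flip (S xbar - xbar)) xbar := hg.congr_of_eventuallyEq heq.symm
  have huniq := hg'.unique hf
  have happ := congrArg (fun T : V →L[ℝ] V => T h) huniq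
  simp [hfix, ContinuousLinearMap.comp_apply, ContinuousLinearMap.sub_apply,
    ContinuousLinearMap.add_apply, ContinuousLinearMap.flip_apply, map_sub] at happ
  have h2 : fderiv ℝ S xbar h - h = P xbar (fderiv ℝ S xbar h) - P xbar h := happ.symm
  rw [sub_eq_iff_eq_add] at h2
  nth_rewrite 1 [h2]; abel
end

section
/- Let V be a real Hilbert space, let x̄ ∈ V, let P : V → L(V) be continuously Fréchet differentiable near x̄ with P(x) an orthogonal projection for every x near x̄, and let S : V → V be continuously Fréchet differentiable near x̄ with P(x)(S(x) − x) = S(x) − x for all x near x̄ and S(x̄) = x̄. Write T̄ for the range of P(x̄). Then (a) S'(x̄) maps T̄ into T̄, and (b) for every subspace W of V with T̄ ⊆ W, S'(x̄) maps W into W. -/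
open Filter Topology

/-- At a fixed point `xbar` of `S`, with `S x - x ∈ range (P x)` near `xbar`:
(a) the Fréchet derivative `S'(xbar)` maps `T̄ = range (P xbar)` into itself, and
(b) it maps every subspace `W ⊇ T̄` into itself. -/
theorem stmt1
    {V : Type*} [NormedAddCommGroup V] [InnerProductSpace ℝ V] [CompleteSpace V]
    (xbar : V) (P : V → (V →L[ℝ] V)) (S : V → V)
    (hPproj : ∀ᶠ x in 𝓝 xbar, IsSelfAdjoint (P x) ∧ (P x).comp (P x) = P x)
    (hPdiff : ∀ᶠ x in 𝓝 xbar, ContDiffAt ℝ 1 P x)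
    (hSdiff : ∀ᶠ x in 𝓝 xbar, ContDiffAt ℝ 1 S x)
    (hrel : ∀ᶠ x in 𝓝 xbar, P x (S x - x) = S x - x)
    (hfix : S xbar = xbar) :
    (∀ h ∈ LinearMap.range (P xbar : V →ₗ[ℝ] V), fderiv ℝ S xbar h ∈ LinearMap.range (P xbar : V →ₗ[ℝ] V)) ∧
      (∀ W : Submodule ℝ V, LinearMap.range (P xbar : V →ₗ[ℝ] V) ≤ W →
        ∀ h ∈ W, fderiv ℝ S xbar h ∈ W) := by
  have hSd : DifferentiableAt ℝ S xbar :=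
    hSdiff.self_of_nhds.differentiableAt one_ne_zero
  have hPd : DifferentiableAt ℝ P xbar :=
    hPdiff.self_of_nhds.differentiableAt one_ne_zero
  set S' := fderiv ℝ S xbar with hS'
  have hg : HasFDerivAt (fun x => S x - x) (S' - ContinuousLinearMap.id ℝ V) xbar :=
    hSd.hasFDerivAt.sub (hasFDerivAt_id xbar)
  have hf : HasFDerivAt (fun x => P x (S x - x))
      ((P xbar).comp (S' - ContinuousLinearMap.id ℝ V) +
        (fderiv ℝ P xbar).flip (S xbar - xbar)) xbar :=
    hPd.hasFDerivAt.clm_apply hg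
  have hz : S xbar - xbar = 0 := by rw [hfix]; simp
  rw [hz, map_zero, add_zero] at hf
  have heq : (fun x => S x - x) =ᶠ[𝓝 xbar] (fun x => P x (S x - x)) :=
    Filter.EventuallyEq.symm (hrel : (fun x => P x (S x - x)) =ᶠ[𝓝 xbar] (fun x => S x - x))
  have hf' : HasFDerivAt (fun x => S x - x)
      ((P xbar).comp (S' - ContinuousLinearMap.id ℝ V)) xbar :=
    hf.congr_of_eventuallyEq heq
  have hkey : S' - ContinuousLinearMap.id ℝ V
      = (P xbar).comp (S' - ContinuousLinearMap.id ℝ V) := hg.unique hf'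
  have key : ∀ h : V, P xbar (S' h - h) = S' h - h := by
    intro h
    have := congrArg (fun L : V →L[ℝ] V => L h) hkey
    simpa using this.symm
  have hb : ∀ W : Submodule ℝ V, LinearMap.range (P xbar : V →ₗ[ℝ] V) ≤ W →
      ∀ h ∈ W, S' h ∈ W := by
    intro W hW h hh
    have h1 : S' h - h ∈ W := hW ⟨S' h - h, key h⟩
    simpa using W.add_mem h1 hh
  exact ⟨fun h hh => hb _ le_rfl h hh, hb⟩
end

section
/- Let V be a real Hilbert space, let x̄ ∈ V, let P : V → L(V) be continuously Fréchet differentiable near x̄ with P(x) an orthogonal projection for every x near x̄, and let S : V → V be continuously Fréchet differentiable near x̄ with P(x)(S(x) − x) = S(x) − x for all x near x̄ and S(x̄) = x̄. Write T̄ for the range of P(x̄) and T̄⊥ for its orthogonal complement. Then (a) ‖S'(x̄)h‖ ≥ ‖h‖ for every h ∈ T̄⊥, and (b) S'(x̄)h = h for every h ∈ T̄⊥ if and only if S'(x̄) maps T̄⊥ into T̄⊥. -/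
open Filter Topology RealInnerProductSpace

/-- At a fixed point `xbar` of `S`, with `S x - x ∈ range (P x)` near `xbar`,
letting `T̄ = range (P xbar)`:
(a) `‖S'(xbar) h‖ ≥ ‖h‖` for every `h ∈ T̄ᗮ`, and
(b) `S'(xbar) h = h` for all `h ∈ T̄ᗮ` iff `S'(xbar)` maps `T̄ᗮ` into `T̄ᗮ`. -/
theorem stmt2
    {V : Type*} [NormedAddCommGroup V] [InnerProductSpace ℝ V] [CompleteSpace V]
    (xbar : V) (P : V → (V →L[ℝ] V)) (S : V → V)
    (hPproj : ∀ᶠ x in 𝓝 xbar, IsSelfAdjoint (P x) ∧ (P x).comp (P x) = P x)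
    (hPdiff : ∀ᶠ x in 𝓝 xbar, ContDiffAt ℝ 1 P x)
    (hSdiff : ∀ᶠ x in 𝓝 xbar, ContDiffAt ℝ 1 S x)
    (hrel : ∀ᶠ x in 𝓝 xbar, P x (S x - x) = S x - x)
    (hfix : S xbar = xbar) :
    (∀ h ∈ (LinearMap.range (P xbar : V →ₗ[ℝ] V))ᗮ, ‖h‖ ≤ ‖fderiv ℝ S xbar h‖) ∧
      ((∀ h ∈ (LinearMap.range (P xbar : V →ₗ[ℝ] V))ᗮ, fderiv ℝ S xbar h = h) ↔
        (∀ h ∈ (LinearMap.range (P xbar : V →ₗ[ℝ] V))ᗮ, fderiv ℝ S xbar h ∈ (LinearMap.range (P xbar : V →ₗ[ℝ] V))ᗮ)) := by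
  set Q := P xbar with hQ
  set A := fderiv ℝ S xbar with hA
  have hSd : DifferentiableAt ℝ S xbar := hSdiff.self_of_nhds.differentiableAt one_ne_zero
  have hPd : DifferentiableAt ℝ P xbar := hPdiff.self_of_nhds.differentiableAt one_ne_zero
  have hud : DifferentiableAt ℝ (fun x => S x - x) xbar := hSd.sub differentiableAt_id
  have hu0 : S xbar - xbar = 0 := by rw [hfix, sub_self]
  have hfu : ∀ h, fderiv ℝ (fun x => S x - x) xbar h = A h - h := by
    have hfu' : fderiv ℝ (fun x => S x - x) xbar = A - ContinuousLinearMap.id ℝ V :=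
      ((hSd.hasFDerivAt).sub (hasFDerivAt_id xbar)).fderiv
    intro h
    rw [hfu']; simp
  have hg : fderiv ℝ (fun x => P x (S x - x)) xbar
      = Q.comp (fderiv ℝ (fun x => S x - x) xbar) := by
    rw [fderiv_clm_apply hPd hud]
    simp [hu0, ← hQ]
  have heq : fderiv ℝ (fun x => P x (S x - x)) xbar = fderiv ℝ (fun x => S x - x) xbar :=
    Filter.EventuallyEq.fderiv_eq hrel
  have hkey : ∀ h, Q (A h - h) = A h - h := by
    intro h
    have := congrArg (fun L => L h) (hg.symm.trans heq)
    simpa [hfu h] using this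
  have hSA : IsSelfAdjoint Q := (hPproj.self_of_nhds).1
  have hidem : Q.comp Q = Q := (hPproj.self_of_nhds).2
  have hidem' : ∀ v, Q (Q v) = Q v := fun v => congrArg (fun L => L v) hidem
  have hSA' : ContinuousLinearMap.adjoint Q = Q :=
    ContinuousLinearMap.isSelfAdjoint_iff'.mp hSA
  have hker : ∀ h ∈ (LinearMap.range (Q : V →ₗ[ℝ] V))ᗮ, Q h = 0 := by
    intro h hh
    have h1 : (inner ℝ (Q h) (Q h) : ℝ) = 0 := by
      have h2 : (inner ℝ (Q h) (Q h) : ℝ) = (inner ℝ (Q h) h : ℝ) := by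
        nth_rewrite 1 [← hSA']
        rw [ContinuousLinearMap.adjoint_inner_left, hidem']
        exact real_inner_comm _ _
      rw [h2]
      exact hh (Q h) ⟨h, rfl⟩
    simpa using h1
  -- for h ∈ T̄ᗮ : Q (A h) = A h - h
  have hmain : ∀ h ∈ (LinearMap.range (Q : V →ₗ[ℝ] V))ᗮ, Q (A h) = A h - h := by
    intro h hh
    have := hkey h
    rw [map_sub, hker h hh, sub_zero] at this
    exact this
  constructor
  · intro h hh
    have hdecomp : A h = h + Q (A h) := by
      rw [hmain h hh]; abel
    have horth : (inner ℝ h (Q (A h)) : ℝ) = 0 := by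
      rw [real_inner_comm]
      exact hh (Q (A h)) ⟨A h, rfl⟩
    have hsq : ‖A h‖ ^ 2 = ‖h‖ ^ 2 + ‖Q (A h)‖ ^ 2 := by
      nth_rewrite 1 [hdecomp]
      rw [norm_add_sq_real, horth]; ring
    nlinarith [norm_nonneg h, norm_nonneg (A h), norm_nonneg (Q (A h))]
  · constructor
    · intro hid h hh
      rw [hid h hh]; exact hh
    · intro hmem h hh
      have h0 : Q (A h) = 0 := hker (A h) (hmem h hh)
      have := hmain h hh
      rw [h0] at this
      have h2 : A h - h = 0 := this.symm
      exact sub_eq_zero.mp h2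
end

section
/- Let V be a real Hilbert space and x̄ ∈ V. For i = 1,…,d let P_i : V → L(V) be continuously Fréchet differentiable near x̄ with each P_i(x) an orthogonal projection, and let S_i : V → V be continuously Fréchet differentiable near x̄ with P_i(x)(S_i(x) − x) = S_i(x) − x for all x near x̄ and S_i(x̄) = x̄. Write P̄_i = P_i(x̄), let T̄ be a closed subspace of V containing the range of every P̄_i, and let P̄ be the orthogonal projection onto T̄. Set S = S_d ∘ ⋯ ∘ S_1. Then (I − P̄) ∘ S'(x̄) = (I − P̄) ∘ (I − P̄_d) ∘ ⋯ ∘ (I − P̄_1). -/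
open Filter Topology

/-- Auxiliary: folding composition of functions each differentiable at `xbar`, fixing `xbar`,
and whose derivative `A` satisfies `Q.comp A = Q`, yields the same properties. -/
theorem aux_fold_fun {V : Type*} [NormedAddCommGroup V] [NormedSpace ℝ V]
    (Q : V →L[ℝ] V) (xbar : V) :
    ∀ (l : List (V → V)),
      (∀ f ∈ l, DifferentiableAt ℝ f xbar ∧ f xbar = xbar ∧
        Q.comp (fderiv ℝ f xbar) = Q) →
      (l.foldl (fun y f => f y) xbar = xbar) ∧
      DifferentiableAt ℝ (fun x => l.foldl (fun y f => f y) x) xbar ∧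
      Q.comp (fderiv ℝ (fun x => l.foldl (fun y f => f y) x) xbar) = Q := by
  intro l
  induction l with
  | nil =>
    intro _
    refine ⟨rfl, ?_, ?_⟩
    · simp only [List.foldl_nil]; exact differentiableAt_fun_id
    · simp only [List.foldl_nil]
      have : fderiv ℝ (fun x : V => x) xbar = 1 := fderiv_id'
      rw [this]; rfl
  | cons f l ih =>
    intro h
    obtain ⟨hfd, hffix, hfQ⟩ := h f (List.mem_cons_self)
    obtain ⟨hGfix, hGd, hGQ⟩ := ih (fun g hg => h g (List.mem_cons_of_mem f hg))
    have heq : (fun x => (f :: l).foldl (fun y g => g y) x)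
        = (fun y => l.foldl (fun y g => g y) y) ∘ f := rfl
    have hGd' : DifferentiableAt ℝ (fun y => l.foldl (fun y g => g y) y) (f xbar) := by
      rwa [hffix]
    constructor
    · show l.foldl (fun y g => g y) (f xbar) = xbar
      rw [hffix]; exact hGfix
    constructor
    · rw [heq]; exact hGd'.comp xbar hfd
    · rw [heq, fderiv_comp xbar hGd' hfd, hffix, ← ContinuousLinearMap.comp_assoc,
        hGQ, hfQ]

/-- Auxiliary: folding composition of operators each absorbed by `Q` on the left. -/
theorem aux_fold_op {V : Type*} [NormedAddCommGroup V] [NormedSpace ℝ V]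
    (Q : V →L[ℝ] V) :
    ∀ (l : List (V →L[ℝ] V)) (c : V →L[ℝ] V),
      (∀ q ∈ l, Q.comp q = Q) →
      Q.comp (l.foldl (fun (acc q : V →L[ℝ] V) => q.comp acc) c) = Q.comp c := by
  intro l
  induction l with
  | nil => intro c _; rfl
  | cons q l ih =>
    intro c h
    have : (q :: l).foldl (fun (acc q : V →L[ℝ] V) => q.comp acc) c
        = l.foldl (fun (acc q : V →L[ℝ] V) => q.comp acc) (q.comp c) := rfl
    rw [this, ih (q.comp c) (fun r hr => h r (List.mem_cons_of_mem q hr)),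
      ← ContinuousLinearMap.comp_assoc, h q (List.mem_cons_self)]

/-- For the composite map `S = S_d ∘ ⋯ ∘ S_1` of maps each fixing `xbar` and
satisfying `P_i x (S_i x - x) = S_i x - x` near `xbar` (each `P_i x` an orthogonal projection),
if `T̄` is a closed subspace containing the range of every `P̄_i = P_i xbar` with orthogonal
projection `Pbar`, then `(I - Pbar) ∘ S'(xbar) = (I - Pbar) ∘ (I - P̄_d) ∘ ⋯ ∘ (I - P̄_1)`. -/
theorem stmt3
    {V : Type*} [NormedAddCommGroup V] [InnerProductSpace ℝ V] [CompleteSpace V]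
    (d : ℕ) (xbar : V) (P : Fin d → V → (V →L[ℝ] V)) (S : Fin d → V → V)
    (hPproj : ∀ i, ∀ᶠ x in 𝓝 xbar, IsSelfAdjoint (P i x) ∧ (P i x).comp (P i x) = P i x)
    (hPdiff : ∀ i, ∀ᶠ x in 𝓝 xbar, ContDiffAt ℝ 1 (P i) x)
    (hSdiff : ∀ i, ∀ᶠ x in 𝓝 xbar, ContDiffAt ℝ 1 (S i) x)
    (hrel : ∀ i, ∀ᶠ x in 𝓝 xbar, P i x (S i x - x) = S i x - x)
    (hfix : ∀ i, S i xbar = xbar)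
    (T : Submodule ℝ V) (hTclosed : IsClosed (T : Set V))
    (hTi : ∀ i, LinearMap.range (P i xbar : V →ₗ[ℝ] V) ≤ T)
    (Pbar : V →L[ℝ] V)
    (hPbar : IsSelfAdjoint Pbar ∧ Pbar.comp Pbar = Pbar ∧ LinearMap.range (Pbar : V →ₗ[ℝ] V) = T)
    (Scomp : V → V)
    (hScomp : ∀ x, Scomp x = (List.ofFn S).foldl (fun y f => f y) x) :
    ((1 : V →L[ℝ] V) - Pbar).comp (fderiv ℝ Scomp xbar) =
      ((1 : V →L[ℝ] V) - Pbar).comp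
        ((List.ofFn fun i => (1 : V →L[ℝ] V) - P i xbar).foldl (fun (acc q : V →L[ℝ] V) => q.comp acc) 1) := by
  set Q : V →L[ℝ] V := (1 : V →L[ℝ] V) - Pbar with hQdef
  -- Pbar fixes every element of T
  have hfixT : ∀ v ∈ T, Pbar v = v := by
    intro v hv
    rw [← hPbar.2.2] at hv
    obtain ⟨w, rfl⟩ := hv
    have := congrArg (fun f : V →L[ℝ] V => f w) hPbar.2.1
    simpa using this
  have hQT : ∀ v ∈ T, Q v = 0 := by
    intro v hv
    simp [hQdef, hfixT v hv]
  -- Key fact per i : Q ∘ (fderiv S_i) = Q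
  have key : ∀ i, Q.comp (fderiv ℝ (S i) xbar) = Q := by
    intro i
    have hSd : DifferentiableAt ℝ (S i) xbar :=
      ((hSdiff i).self_of_nhds).differentiableAt one_ne_zero
    have hPd : DifferentiableAt ℝ (P i) xbar :=
      ((hPdiff i).self_of_nhds).differentiableAt one_ne_zero
    set A := fderiv ℝ (S i) xbar with hA
    have hw : DifferentiableAt ℝ (fun x => S i x - x) xbar := hSd.sub differentiableAt_fun_id
    have hw0 : S i xbar - xbar = 0 := by simp [hfix i]
    have hfw : fderiv ℝ (fun x => S i x - x) xbar = A - 1 := by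
      rw [fderiv_fun_sub hSd differentiableAt_fun_id]
      simp [hA, fderiv_id']
      rfl
    have hg0 : (fun x => P i x (S i x - x) - (S i x - x)) =ᶠ[𝓝 xbar] (fun _ => (0 : V)) := by
      filter_upwards [hrel i] with x hx
      simp [hx]
    have hgd : fderiv ℝ (fun x => P i x (S i x - x) - (S i x - x)) xbar = 0 := by
      rw [hg0.fderiv_eq]
      exact fderiv_const_apply 0
    have h1 : fderiv ℝ (fun x => P i x (S i x - x)) xbar = (P i xbar).comp (A - 1) := by
      rw [fderiv_clm_apply hPd hw]
      simp [hw0, hfw]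
    have h2 : (P i xbar).comp (A - 1) - (A - 1) = 0 := by
      have hd1 : DifferentiableAt ℝ (fun x => P i x (S i x - x)) xbar := hPd.clm_apply hw
      rw [← h1, ← hfw, ← fderiv_fun_sub hd1 hw, hgd]
    ext v
    have hv : A v - v = P i xbar (A v - v) := by
      have := congrArg (fun f : V →L[ℝ] V => f v) h2
      simp only [ContinuousLinearMap.sub_apply, ContinuousLinearMap.comp_apply,
        ContinuousLinearMap.zero_apply, ContinuousLinearMap.one_apply, sub_eq_zero] at this
      exact this.symm
    have hmem : A v - v ∈ T := by
      rw [hv]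
      exact hTi i ⟨A v - v, rfl⟩
    have hz : Q (A v - v) = 0 := hQT _ hmem
    rw [map_sub, sub_eq_zero] at hz
    simpa using hz
  -- rewrite Scomp as the fold
  have hSfun : Scomp = fun x => (List.ofFn S).foldl (fun y f => f y) x := funext hScomp
  have hmain := aux_fold_fun Q xbar (List.ofFn S) ?_
  · have hRHS := aux_fold_op Q (List.ofFn fun i => (1 : V →L[ℝ] V) - P i xbar) 1 ?_
    · rw [hSfun, hmain.2.2, hRHS]; rfl
    · intro q hq
      obtain ⟨i, rfl⟩ := List.mem_ofFn.1 hq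
      ext v
      have hz : Q (P i xbar v) = 0 := hQT _ (hTi i ⟨v, rfl⟩)
      simp [map_sub, hz]
  · intro f hf
    obtain ⟨i, rfl⟩ := List.mem_ofFn.1 hf
    exact ⟨((hSdiff i).self_of_nhds).differentiableAt one_ne_zero, hfix i, key i⟩
end

section
/- Let V be a real Hilbert space and x̄ ∈ V. For i = 1,…,d let P_i : V → L(V) be continuously Fréchet differentiable near x̄ with each P_i(x) an orthogonal projection, and let S_i : V → V be continuously Fréchet differentiable near x̄ with P_i(x)(S_i(x) − x) = S_i(x) − x for all x near x̄ and S_i(x̄) = x̄. Write P̄_i = P_i(x̄), let T̄ be a closed subspace of V containing the range of every P̄_i, and let P̄ be the orthogonal projection onto T̄. Set S = S_d ∘ ⋯ ∘ S_1. Then: (a) S'(x̄) maps T̄ into T̄, i.e., S'(x̄) ∘ P̄ = P̄ ∘ S'(x̄) ∘ P̄; (b) (I − P̄) ∘ S'(x̄) ∘ (I − P̄) = I − P̄; (c) consequently ‖S'(x̄)h‖ ≥ ‖h‖ for every h in the orthogonal complement of T̄. -/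
open Filter Topology

/-- Auxiliary: the foldl composition of functions fixing `xbar`, differentiable at `xbar`,
whose derivative is `I + (operator into T)`, has the same three properties. -/
lemma stmt4_foldl_aux {V : Type*} [NormedAddCommGroup V] [NormedSpace ℝ V]
    (xbar : V) (T : Submodule ℝ V) :
    ∀ (l : List (V → V)),
      (∀ f ∈ l, DifferentiableAt ℝ f xbar ∧ f xbar = xbar ∧
        ∀ v, fderiv ℝ f xbar v - v ∈ T) →
      DifferentiableAt ℝ (fun x => l.foldl (fun y f => f y) x) xbar ∧
      (fun x => l.foldl (fun y f => f y) x) xbar = xbar ∧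
      ∀ v, fderiv ℝ (fun x => l.foldl (fun y f => f y) x) xbar v - v ∈ T := by
  intro l
  induction l with
  | nil =>
    intro _
    refine ⟨differentiableAt_id, rfl, fun v => ?_⟩
    simp [fderiv_id']
  | cons f l ih =>
    intro h
    obtain ⟨hdf, hfx, hfT⟩ := h f List.mem_cons_self
    obtain ⟨hdG, hGx, hGT⟩ := ih (fun g hg => h g (List.mem_cons_of_mem _ hg))
    set G : V → V := fun x => l.foldl (fun y f => f y) x with hGdef
    have hFG : (fun x => (f :: l).foldl (fun y f => f y) x) = fun x => G (f x) := by
      funext x; simp [hGdef]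
    have hdG' : DifferentiableAt ℝ G (f xbar) := by rw [hfx]; exact hdG
    have hdF : DifferentiableAt ℝ (fun x => G (f x)) xbar := hdG'.comp xbar hdf
    have hderiv : fderiv ℝ (fun x => G (f x)) xbar =
        (fderiv ℝ G xbar).comp (fderiv ℝ f xbar) := by
      have := fderiv_comp xbar hdG' hdf
      rw [hfx] at this
      exact this
    refine ⟨by rw [hFG]; exact hdF, by rw [hFG]; simp only []; rw [hfx, hGx], fun v => ?_⟩
    rw [hFG, hderiv]
    have h1 : fderiv ℝ G xbar (fderiv ℝ f xbar v) - fderiv ℝ f xbar v ∈ T :=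
      hGT (fderiv ℝ f xbar v)
    have h2 : fderiv ℝ f xbar v - v ∈ T := hfT v
    have : (fderiv ℝ G xbar).comp (fderiv ℝ f xbar) v - v =
        (fderiv ℝ G xbar (fderiv ℝ f xbar v) - fderiv ℝ f xbar v) +
          (fderiv ℝ f xbar v - v) := by
      simp only [ContinuousLinearMap.comp_apply]
      abel
    rw [this]
    exact T.add_mem h1 h2

/-- For the composite map `S = S_d ∘ ⋯ ∘ S_1` as in Statement 3:
(a) `S'(xbar)` maps `T̄` into `T̄`, i.e. `S'(xbar) ∘ Pbar = Pbar ∘ S'(xbar) ∘ Pbar`;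
(b) `(I - Pbar) ∘ S'(xbar) ∘ (I - Pbar) = I - Pbar`;
(c) `‖S'(xbar) h‖ ≥ ‖h‖` for every `h` in the orthogonal complement of `T̄`. -/
theorem stmt4
    {V : Type*} [NormedAddCommGroup V] [InnerProductSpace ℝ V] [CompleteSpace V]
    (d : ℕ) (xbar : V) (P : Fin d → V → (V →L[ℝ] V)) (S : Fin d → V → V)
    (hPproj : ∀ i, ∀ᶠ x in 𝓝 xbar, IsSelfAdjoint (P i x) ∧ (P i x).comp (P i x) = P i x)
    (hPdiff : ∀ i, ∀ᶠ x in 𝓝 xbar, ContDiffAt ℝ 1 (P i) x)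
    (hSdiff : ∀ i, ∀ᶠ x in 𝓝 xbar, ContDiffAt ℝ 1 (S i) x)
    (hrel : ∀ i, ∀ᶠ x in 𝓝 xbar, P i x (S i x - x) = S i x - x)
    (hfix : ∀ i, S i xbar = xbar)
    (T : Submodule ℝ V) (hTclosed : IsClosed (T : Set V))
    (hTi : ∀ i, LinearMap.range (P i xbar : V →ₗ[ℝ] V) ≤ T)
    (Pbar : V →L[ℝ] V)
    (hPbar : IsSelfAdjoint Pbar ∧ Pbar.comp Pbar = Pbar ∧ LinearMap.range (Pbar : V →ₗ[ℝ] V) = T)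
    (Scomp : V → V)
    (hScomp : ∀ x, Scomp x = (List.ofFn S).foldl (fun y f => f y) x) :
    ((fderiv ℝ Scomp xbar).comp Pbar = Pbar.comp ((fderiv ℝ Scomp xbar).comp Pbar)) ∧
      (((1 : V →L[ℝ] V) - Pbar).comp ((fderiv ℝ Scomp xbar).comp ((1 : V →L[ℝ] V) - Pbar)) =
        (1 : V →L[ℝ] V) - Pbar) ∧
      (∀ h ∈ Tᗮ, ‖h‖ ≤ ‖fderiv ℝ Scomp xbar h‖) := by
  obtain ⟨hPsa, hPidem, hPrange⟩ := hPbar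
  -- Key property for each S i
  have key : ∀ i, DifferentiableAt ℝ (S i) xbar ∧ (S i) xbar = xbar ∧
      ∀ v, fderiv ℝ (S i) xbar v - v ∈ T := by
    intro i
    have hSd : DifferentiableAt ℝ (S i) xbar :=
      ((hSdiff i).self_of_nhds).differentiableAt one_ne_zero
    have hPd : DifferentiableAt ℝ (P i) xbar :=
      ((hPdiff i).self_of_nhds).differentiableAt one_ne_zero
    refine ⟨hSd, hfix i, fun v => ?_⟩
    -- derivative of g x = S i x - x
    set D := fderiv ℝ (S i) xbar with hD
    have hg : HasFDerivAt (fun x => S i x - x) (D - ContinuousLinearMap.id ℝ V) xbar :=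
      hSd.hasFDerivAt.sub (hasFDerivAt_id xbar)
    have hP : HasFDerivAt (P i) (fderiv ℝ (P i) xbar) xbar := hPd.hasFDerivAt
    have hcomb := hP.clm_apply hg
    -- g xbar = 0
    have hg0 : S i xbar - xbar = 0 := by rw [hfix i]; simp
    have hE : HasFDerivAt (fun x => P i x (S i x - x))
        ((P i xbar).comp (D - ContinuousLinearMap.id ℝ V)) xbar := by
      have hz : (fderiv ℝ (P i) xbar).flip (S i xbar - xbar) = 0 := by
        rw [hg0]; ext w; simp
      rw [← add_zero ((P i xbar).comp (D - ContinuousLinearMap.id ℝ V)), ← hz]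
      exact hcomb
    -- functions eventually agree
    have heq : (fun x => P i x (S i x - x)) =ᶠ[𝓝 xbar] (fun x => S i x - x) := hrel i
    have hE' : HasFDerivAt (fun x => S i x - x)
        ((P i xbar).comp (D - ContinuousLinearMap.id ℝ V)) xbar :=
      hE.congr_of_eventuallyEq heq.symm
    have huniq : (P i xbar).comp (D - ContinuousLinearMap.id ℝ V)
        = D - ContinuousLinearMap.id ℝ V := hE'.unique hg
    have : P i xbar (D v - v) = D v - v := by
      have := DFunLike.congr_fun huniq v
      simpa using this
    have hmem : D v - v ∈ LinearMap.range (P i xbar : V →ₗ[ℝ] V) := ⟨D v - v, this⟩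
    exact hTi i hmem
  -- apply foldl lemma
  have hlist : ∀ f ∈ List.ofFn S, DifferentiableAt ℝ f xbar ∧ f xbar = xbar ∧
      ∀ v, fderiv ℝ f xbar v - v ∈ T := by
    intro f hf
    obtain ⟨i, rfl⟩ := List.mem_ofFn.mp hf
    exact key i
  have hSc : Scomp = fun x => (List.ofFn S).foldl (fun y f => f y) x := funext hScomp
  have haux := stmt4_foldl_aux xbar T (List.ofFn S) hlist
  rw [← hSc] at haux
  obtain ⟨hdS, hSx, hST⟩ := haux
  set D := fderiv ℝ Scomp xbar with hDdef
  -- Pbar facts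
  have hPmem : ∀ v, Pbar v ∈ T := fun v => by
    rw [← hPrange]; exact ⟨v, rfl⟩
  have hPfix : ∀ v ∈ T, Pbar v = v := by
    intro v hv
    rw [← hPrange] at hv
    obtain ⟨w, rfl⟩ := hv
    exact DFunLike.congr_fun hPidem w
  refine ⟨?_, ?_, ?_⟩
  · ext h
    simp only [ContinuousLinearMap.comp_apply]
    have h1 : D (Pbar h) - Pbar h ∈ T := hST (Pbar h)
    have : Pbar (D (Pbar h)) = Pbar (D (Pbar h) - Pbar h) + Pbar (Pbar h) := by
      rw [map_sub]; abel
    rw [this, hPfix _ h1, hPfix _ (hPmem h)]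
    abel
  · ext h
    simp only [ContinuousLinearMap.comp_apply, ContinuousLinearMap.sub_apply,
      ContinuousLinearMap.one_apply]
    set k := h - Pbar h with hk
    clear_value k
    have h1 : D k - k ∈ T := hST k
    have hPk : Pbar k = 0 := by
      rw [hk, map_sub, hPfix _ (hPmem h), sub_self]
    have e1 : D k = (D k - k) + k := by abel
    have hDk : Pbar (D k) = D k - k := by
      rw [e1, map_add, hPfix _ h1, hPk, add_zero]
      abel
    rw [hDk]
    abel
  · intro h hh
    have h1 : D h - h ∈ T := hST h
    have horth : inner ℝ h (D h - h) = (0 : ℝ) := by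
      have := (Submodule.mem_orthogonal T h).mp hh (D h - h) h1
      rw [real_inner_comm] at this
      exact this
    have hdec : D h = h + (D h - h) := by abel
    have hsq : ‖h + (D h - h)‖ ^ 2 = ‖h‖ ^ 2 + ‖D h - h‖ ^ 2 := by
      rw [@norm_add_sq_real, horth]
      ring
    rw [← hdec] at hsq
    nlinarith [norm_nonneg (D h), norm_nonneg h, sq_nonneg (‖D h - h‖)]
end

section
/- Let V be a real Hilbert space and x̄ ∈ V. Let f : V → ℝ be Fréchet differentiable near x̄ with gradient ∇f : V → V (i.e., f'(x)h = ⟨∇f(x), h⟩), and assume ∇f is continuously Fréchet differentiable near x̄ with derivative A(x) (the Hessian, a self-adjoint bounded operator); write Ā = A(x̄). Let P : V → L(V) be continuously Fréchet differentiable near x̄ with each P(x) an orthogonal projection, write P̄ = P(x̄) and T̄ = range P̄. Let S : V → V be continuously Fréchet differentiable near x̄ with P(x)(S(x) − x) = S(x) − x and P(x)(∇f(S(x))) = 0 for all x near x̄, and S(x̄) = x̄. Assume there is a bounded operator B̄ on V with P̄∘B̄ = B̄∘P̄ = B̄ and B̄∘(P̄∘Ā∘P̄) = (P̄∘Ā∘P̄)∘B̄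 = P̄. Then for every h ∈ V: (a) (P'(x̄)h)(∇f(x̄)) ∈ T̄, and (b) S'(x̄)h = h − B̄(P̄(Āh)) − B̄((P'(x̄)h)(∇f(x̄))). In particular S'(x̄)h = −B̄((P'(x̄)h)(∇f(x̄))) for h ∈ T̄. -/
open Filter Topology

/-- Derivative of a single substep map `S` at a fixed point `xbar`:
with `g = ∇f`, Hessian `A`, orthogonal projections `P x` and `Bbar` a pseudo-inverse of
`P̄ ∘ Ā ∘ P̄` on the range of `P̄ = P xbar`, one has
(a) `(P'(xbar) h)(∇f(xbar)) ∈ range P̄`, and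
(b) `S'(xbar) h = h - Bbar (P̄ (Ā h)) - Bbar ((P'(xbar) h)(∇f(xbar)))`;
in particular `S'(xbar) h = -Bbar ((P'(xbar) h)(∇f(xbar)))` for `h ∈ range P̄`. -/
theorem stmt5
    {V : Type*} [NormedAddCommGroup V] [InnerProductSpace ℝ V] [CompleteSpace V]
    (xbar : V) (f : V → ℝ) (g : V → V) (A : V → (V →L[ℝ] V))
    (P : V → (V →L[ℝ] V)) (S : V → V) (Bbar : V →L[ℝ] V)
    (hf : ∀ᶠ x in 𝓝 xbar, HasFDerivAt f (innerSL ℝ (g x)) x)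
    (hg : ∀ᶠ x in 𝓝 xbar, HasFDerivAt g (A x) x)
    (hAc : ContinuousAt A xbar)
    (hAsa : ∀ᶠ x in 𝓝 xbar, IsSelfAdjoint (A x))
    (hPproj : ∀ᶠ x in 𝓝 xbar, IsSelfAdjoint (P x) ∧ (P x).comp (P x) = P x)
    (hPdiff : ∀ᶠ x in 𝓝 xbar, ContDiffAt ℝ 1 P x)
    (hSdiff : ∀ᶠ x in 𝓝 xbar, ContDiffAt ℝ 1 S x)
    (hrel : ∀ᶠ x in 𝓝 xbar, P x (S x - x) = S x - x)
    (hcrit : ∀ᶠ x in 𝓝 xbar, P x (g (S x)) = 0)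
    (hfix : S xbar = xbar)
    (hB1 : (P xbar).comp Bbar = Bbar) (hB2 : Bbar.comp (P xbar) = Bbar)
    (hB3 : Bbar.comp ((P xbar).comp ((A xbar).comp (P xbar))) = P xbar)
    (hB4 : ((P xbar).comp ((A xbar).comp (P xbar))).comp Bbar = P xbar) :
    (∀ h : V, (fderiv ℝ P xbar h) (g xbar) ∈ LinearMap.range (P xbar : V →ₗ[ℝ] V)) ∧
      (∀ h : V, fderiv ℝ S xbar h
          = h - Bbar (P xbar (A xbar h)) - Bbar ((fderiv ℝ P xbar h) (g xbar))) ∧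
      (∀ h ∈ LinearMap.range (P xbar : V →ₗ[ℝ] V),
          fderiv ℝ S xbar h = -(Bbar ((fderiv ℝ P xbar h) (g xbar)))) := by
  set P' := fderiv ℝ P xbar with hP'
  set S' := fderiv ℝ S xbar with hS'
  have hPd : HasFDerivAt P P' xbar :=
    (hPdiff.self_of_nhds.differentiableAt one_ne_zero).hasFDerivAt
  have hSd : HasFDerivAt S S' xbar :=
    (hSdiff.self_of_nhds.differentiableAt one_ne_zero).hasFDerivAt
  have hu : HasFDerivAt (fun x => S x - x) (S' - ContinuousLinearMap.id ℝ V) xbar :=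
    hSd.sub (hasFDerivAt_id xbar)
  have hSx0 : S xbar - xbar = 0 := by rw [hfix, sub_self]
  -- identity 1
  have h1 : HasFDerivAt (fun x => P x (S x - x))
      ((P xbar).comp (S' - ContinuousLinearMap.id ℝ V) + P'.flip (S xbar - xbar)) xbar :=
    hPd.clm_apply hu
  have h1' : HasFDerivAt (fun x => S x - x)
      ((P xbar).comp (S' - ContinuousLinearMap.id ℝ V) + P'.flip (S xbar - xbar)) xbar :=
    h1.congr_of_eventuallyEq (hrel.mono fun _ hx => hx.symm)
  have e1 : (P xbar).comp (S' - ContinuousLinearMap.id ℝ V)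
      = S' - ContinuousLinearMap.id ℝ V := by
    have := h1'.unique hu
    rwa [hSx0, map_zero, add_zero] at this
  -- identity 2
  have hgS : HasFDerivAt (fun x => g (S x)) ((A xbar).comp S') xbar := by
    have h' : HasFDerivAt g (A xbar) (S xbar) := by rw [hfix]; exact hg.self_of_nhds
    exact h'.comp xbar hSd
  have h2 : HasFDerivAt (fun x => P x (g (S x)))
      ((P xbar).comp ((A xbar).comp S') + P'.flip (g (S xbar))) xbar :=
    hPd.clm_apply hgS
  have h2' : HasFDerivAt (fun _ : V => (0 : V))
      ((P xbar).comp ((A xbar).comp S') + P'.flip (g (S xbar))) xbar :=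
    h2.congr_of_eventuallyEq (hcrit.mono fun _ hx => hx.symm)
  have e2 : (P xbar).comp ((A xbar).comp S') + P'.flip (g xbar) = 0 := by
    have := h2'.unique (hasFDerivAt_const 0 xbar)
    rwa [hfix] at this
  -- pointwise consequences
  have e1p : ∀ h : V, P xbar (S' h - h) = S' h - h := by
    intro h
    have := congrArg (fun T : V →L[ℝ] V => T h) e1
    simpa using this
  have e2p : ∀ h : V, P' h (g xbar) = -(P xbar (A xbar (S' h))) := by
    intro h
    have := congrArg (fun T : V →L[ℝ] V => T h) e2
    simp only [ContinuousLinearMap.add_apply, ContinuousLinearMap.comp_apply,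
      ContinuousLinearMap.flip_apply, ContinuousLinearMap.zero_apply] at this
    exact eq_neg_of_add_eq_zero_right this
  have hB3p : ∀ v : V, Bbar (P xbar (A xbar (P xbar v))) = P xbar v := by
    intro v
    have := congrArg (fun T : V →L[ℝ] V => T v) hB3
    simpa using this
  -- part (a)
  have parta : ∀ h : V, P' h (g xbar) ∈ LinearMap.range (P xbar : V →ₗ[ℝ] V) := by
    intro h
    exact ⟨-(A xbar (S' h)), by rw [map_neg]; exact (e2p h).symm⟩
  -- part (b)
  have partb : ∀ h : V, S' h = h - Bbar (P xbar (A xbar h)) - Bbar (P' h (g xbar)) := by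
    intro h
    set u := S' h - h with hudef
    have hPu : P xbar u = u := e1p h
    have key : Bbar (P xbar (A xbar (S' h)))
        = Bbar (P xbar (A xbar h)) + u := by
      have : S' h = h + u := by rw [hudef]; abel
      rw [this, map_add, map_add, map_add]
      congr 1
      calc Bbar (P xbar (A xbar u)) = Bbar (P xbar (A xbar (P xbar u))) := by rw [hPu]
        _ = P xbar u := hB3p u
        _ = u := hPu
    have : Bbar (P' h (g xbar)) = -(Bbar (P xbar (A xbar h)) + u) := by
      rw [e2p h, map_neg, key]
    have hu' : u = - Bbar (P xbar (A xbar h)) - Bbar (P' h (g xbar)) := by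
      rw [this]; abel
    rw [show S' h = h + u by rw [hudef]; abel, hu']; abel
  refine ⟨parta, partb, ?_⟩
  rintro h ⟨y, rfl⟩
  have hPh : P xbar (P xbar y) = P xbar y := by
    have := congrArg (fun T : V →L[ℝ] V => T y) (hPproj.self_of_nhds).2
    simpa using this
  rw [ContinuousLinearMap.coe_coe, partb (P xbar y)]
  have : Bbar (P xbar (A xbar (P xbar y))) = P xbar y := hB3p y
  rw [this]
  abel
end

section
/- Let V be a real Hilbert space and x̄ ∈ V. Let f : V → ℝ be Fréchet differentiable near x̄ with gradient ∇f : V → V, and assume ∇f is continuously Fréchet differentiable near x̄ with derivative A(x); write Ā = A(x̄). For i = 1,…,d let P_i : V → L(V) be continuously Fréchet differentiable near x̄ with each P_i(x) an orthogonal projection, write P̄_i = P_i(x̄), and let S_i : V → V be continuously Fréchet differentiable near x̄ with P_i(x)(S_i(x) − x) = S_i(x) − x, P_i(x)(∇f(S_i(x))) = 0 for all x near x̄, and S_i(x̄) = x̄. Assume for each i there is a bounded operator B̄_i on V with P̄_i∘B̄_i = B̄_i∘P̄_i = B̄_i and B̄_i∘(P̄_i∘Ā∘P̄_i) = (P̄_i∘Ā∘P̄_i)∘B̄_i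 = P̄_i. Define N̄_i ∈ L(V) by N̄_i h = (P_i'(x̄)h)(∇f(x̄)). Then for S = S_d ∘ ⋯ ∘ S_1 one has S'(x̄) = [(I − B̄_d∘P̄_d∘Ā) − B̄_d∘N̄_d] ∘ ⋯ ∘ [(I − B̄_1∘P̄_1∘Ā) − B̄_1∘N̄_1]. -/
open Filter Topology

private lemma foldl_comp_eq {V : Type*} [NormedAddCommGroup V] [NormedSpace ℝ V]
    (l : List (V →L[ℝ] V)) (c : V →L[ℝ] V) :
    l.foldl (fun (acc q : V →L[ℝ] V) => q.comp acc) c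
      = (l.foldl (fun (acc q : V →L[ℝ] V) => q.comp acc) 1).comp c := by
  induction l generalizing c with
  | nil => simp [ContinuousLinearMap.one_def]
  | cons q l ih =>
      simp only [List.foldl_cons]
      rw [ih (q.comp c), ih (q.comp 1)]
      ext v; simp

private lemma fold_hasFDerivAt {V : Type*} [NormedAddCommGroup V] [NormedSpace ℝ V]
    (x : V) (l : List ((V → V) × (V →L[ℝ] V)))
    (h : ∀ p ∈ l, HasFDerivAt p.1 p.2 x ∧ p.1 x = x) :
    HasFDerivAt (fun y => (l.map Prod.fst).foldl (fun y F => F y) y)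
        ((l.map Prod.snd).foldl (fun (acc q : V →L[ℝ] V) => q.comp acc) 1) x
      ∧ (l.map Prod.fst).foldl (fun y F => F y) x = x := by
  induction l with
  | nil => simp only [List.map_nil, List.foldl_nil, and_true]; exact hasFDerivAt_id x
  | cons p l ih =>
      obtain ⟨hp, hpx⟩ := h p List.mem_cons_self
      obtain ⟨ihd, ihx⟩ := ih (fun q hq => h q (List.mem_cons_of_mem p hq))
      simp only [List.map_cons, List.foldl_cons]
      constructor
      · have hd2 : HasFDerivAt (fun y => (l.map Prod.fst).foldl (fun y F => F y) y)
            ((l.map Prod.snd).foldl (fun (acc q : V →L[ℝ] V) => q.comp acc) 1) (p.1 x) := by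
          rw [hpx]; exact ihd
        have hcomp := hd2.comp x hp
        rw [foldl_comp_eq]
        simpa [Function.comp_def, ContinuousLinearMap.one_def] using hcomp
      · rw [hpx, ihx]

private lemma single_step {V : Type*} [NormedAddCommGroup V] [NormedSpace ℝ V]
    (xbar : V) (g : V → V) (A : V → (V →L[ℝ] V)) (P : V → (V →L[ℝ] V)) (S : V → V)
    (B N : V →L[ℝ] V)
    (hg : HasFDerivAt g (A xbar) xbar)
    (hPdiff : ContDiffAt ℝ 1 P xbar)
    (hSdiff : ContDiffAt ℝ 1 S xbar)
    (hrel : ∀ᶠ x in 𝓝 xbar, P x (S x - x) = S x - x)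
    (hcrit : ∀ᶠ x in 𝓝 xbar, P x (g (S x)) = 0)
    (hfix : S xbar = xbar)
    (hB3 : B.comp ((P xbar).comp ((A xbar).comp (P xbar))) = P xbar)
    (hN : ∀ h : V, N h = (fderiv ℝ P xbar h) (g xbar)) :
    HasFDerivAt S (((1 : V →L[ℝ] V) - B.comp ((P xbar).comp (A xbar))) - B.comp N) xbar := by
  set D := fderiv ℝ S xbar with hDdef
  have hD : HasFDerivAt S D xbar := (hSdiff.differentiableAt one_ne_zero).hasFDerivAt
  have hP' : HasFDerivAt P (fderiv ℝ P xbar) xbar := (hPdiff.differentiableAt one_ne_zero).hasFDerivAt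
  set P' := fderiv ℝ P xbar with hP'def
  have hu : HasFDerivAt (fun x => S x - x) (D - 1) xbar := by
    exact hD.sub (hasFDerivAt_id xbar)
  have h1 := hP'.clm_apply hu
  have r1 : (P xbar).comp (D - 1) = D - 1 := by
    have heq : (fun x => S x - x) =ᶠ[𝓝 xbar] fun x => P x (S x - x) :=
      Filter.EventuallyEq.symm hrel
    have := (h1.congr_of_eventuallyEq heq).unique hu
    simpa [hfix, sub_self] using this
  have hgS : HasFDerivAt (fun x => g (S x)) ((A xbar).comp D) xbar := by
    have hg' : HasFDerivAt g (A xbar) (S xbar) := by rw [hfix]; exact hg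
    exact hg'.comp xbar hD
  have h2 := hP'.clm_apply hgS
  have r2 : (P xbar).comp ((A xbar).comp D) + P'.flip (g xbar) = 0 := by
    have heq : (fun _ : V => (0 : V)) =ᶠ[𝓝 xbar] fun x => P x (g (S x)) :=
      Filter.EventuallyEq.symm hcrit
    have := (h2.congr_of_eventuallyEq heq).unique (hasFDerivAt_const (0 : V) xbar)
    simpa [hfix] using this
  have hNeq : P'.flip (g xbar) = N := by
    ext h
    simp [ContinuousLinearMap.flip_apply, hN h]
  -- algebra
  have m3 : B * (P xbar * (A xbar * P xbar)) = P xbar := by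
    simpa [ContinuousLinearMap.mul_def] using hB3
  have m1 : P xbar * (D - 1) = D - 1 := by
    simpa [ContinuousLinearMap.mul_def] using r1
  have m2 : P xbar * (A xbar * D) = -N := by
    have := r2
    rw [hNeq] at this
    have := eq_neg_of_add_eq_zero_left this
    simpa [ContinuousLinearMap.mul_def] using this
  have hDE : D = 1 + (D - 1) := by abel
  have e1 : B * (P xbar * (A xbar * D)) = -(B * N) := by rw [m2]; simp [mul_neg]
  have e2 : B * (P xbar * (A xbar * D)) = B * (P xbar * A xbar) + (D - 1) := by
    conv_lhs => rw [hDE]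
    conv_lhs => rw [show (D - 1 : V →L[ℝ] V) = P xbar * (D - 1) from m1.symm]
    have expand : B * (P xbar * (A xbar * (1 + P xbar * (D - 1))))
        = B * (P xbar * A xbar) + (B * (P xbar * (A xbar * P xbar))) * (D - 1) := by
      noncomm_ring
    rw [expand, m3, m1]
  have key : B * (P xbar * A xbar) + (D - 1) = -(B * N) := e2.symm.trans e1
  have hsub : D - 1 = -(B * N) - B * (P xbar * A xbar) := by rw [← key]; abel
  have final : ((1 : V →L[ℝ] V) - B * (P xbar * A xbar)) - B * N = D := by
    rw [hDE, hsub]; abel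
  have final' : ((1 : V →L[ℝ] V) - B.comp ((P xbar).comp (A xbar))) - B.comp N = D := by
    simpa [ContinuousLinearMap.mul_def] using final
  rw [final']
  exact hD

/-- Chain-rule formula for the derivative of the full sweep
`S = S_d ∘ ⋯ ∘ S_1` at a common fixed point `xbar`:
`S'(xbar) = [(I - B̄_d P̄_d Ā) - B̄_d N̄_d] ∘ ⋯ ∘ [(I - B̄_1 P̄_1 Ā) - B̄_1 N̄_1]`,
where `N̄_i h = (P_i'(xbar) h)(∇f(xbar))`. -/
theorem stmt6
    {V : Type*} [NormedAddCommGroup V] [InnerProductSpace ℝ V] [CompleteSpace V]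
    (d : ℕ) (xbar : V) (f : V → ℝ) (g : V → V) (A : V → (V →L[ℝ] V))
    (P : Fin d → V → (V →L[ℝ] V)) (S : Fin d → V → V) (B : Fin d → (V →L[ℝ] V))
    (N : Fin d → (V →L[ℝ] V))
    (hf : ∀ᶠ x in 𝓝 xbar, HasFDerivAt f (innerSL ℝ (g x)) x)
    (hg : ∀ᶠ x in 𝓝 xbar, HasFDerivAt g (A x) x)
    (hAc : ContinuousAt A xbar)
    (hAsa : ∀ᶠ x in 𝓝 xbar, IsSelfAdjoint (A x))
    (hPproj : ∀ i, ∀ᶠ x in 𝓝 xbar, IsSelfAdjoint (P i x) ∧ (P i x).comp (P i x) = P i x)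
    (hPdiff : ∀ i, ∀ᶠ x in 𝓝 xbar, ContDiffAt ℝ 1 (P i) x)
    (hSdiff : ∀ i, ∀ᶠ x in 𝓝 xbar, ContDiffAt ℝ 1 (S i) x)
    (hrel : ∀ i, ∀ᶠ x in 𝓝 xbar, P i x (S i x - x) = S i x - x)
    (hcrit : ∀ i, ∀ᶠ x in 𝓝 xbar, P i x (g (S i x)) = 0)
    (hfix : ∀ i, S i xbar = xbar)
    (hB1 : ∀ i, (P i xbar).comp (B i) = B i) (hB2 : ∀ i, (B i).comp (P i xbar) = B i)
    (hB3 : ∀ i, (B i).comp ((P i xbar).comp ((A xbar).comp (P i xbar))) = P i xbar)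
    (hB4 : ∀ i, ((P i xbar).comp ((A xbar).comp (P i xbar))).comp (B i) = P i xbar)
    (hN : ∀ i, ∀ h : V, N i h = (fderiv ℝ (P i) xbar h) (g xbar))
    (Scomp : V → V)
    (hScomp : ∀ x, Scomp x = (List.ofFn S).foldl (fun y F => F y) x) :
    fderiv ℝ Scomp xbar =
      (List.ofFn fun i =>
          ((1 : V →L[ℝ] V) - (B i).comp ((P i xbar).comp (A xbar))) - (B i).comp (N i)).foldl
        (fun (acc q : V →L[ℝ] V) => q.comp acc) 1 := by
  set Q : Fin d → (V →L[ℝ] V) := fun i =>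
    ((1 : V →L[ℝ] V) - (B i).comp ((P i xbar).comp (A xbar))) - (B i).comp (N i) with hQdef
  have hstep : ∀ i, HasFDerivAt (S i) (Q i) xbar := fun i =>
    single_step xbar g A (P i) (S i) (B i) (N i) (hg.self_of_nhds)
      ((hPdiff i).self_of_nhds) ((hSdiff i).self_of_nhds) (hrel i) (hcrit i) (hfix i)
      (hB3 i) (hN i)
  set pairs : List ((V → V) × (V →L[ℝ] V)) := List.ofFn (fun i => (S i, Q i)) with hpairs
  have hmem : ∀ p ∈ pairs, HasFDerivAt p.1 p.2 xbar ∧ p.1 xbar = xbar := by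
    intro p hp
    rw [hpairs, List.mem_ofFn] at hp
    obtain ⟨i, hi⟩ := hp
    rw [← hi]
    exact ⟨hstep i, hfix i⟩
  have hfold := fold_hasFDerivAt xbar pairs hmem
  have hfst : pairs.map Prod.fst = List.ofFn S := by
    rw [hpairs, List.map_ofFn]; rfl
  have hsnd : pairs.map Prod.snd = List.ofFn Q := by
    rw [hpairs, List.map_ofFn]; rfl
  have hSeq : Scomp = fun y => (pairs.map Prod.fst).foldl (fun y F => F y) y := by
    funext x
    rw [hScomp x, hfst]
  have : HasFDerivAt Scomp ((List.ofFn Q).foldl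
      (fun (acc q : V →L[ℝ] V) => q.comp acc) 1) xbar := by
    rw [hSeq, ← hsnd]
    exact hfold.1
  exact this.fderiv
end

section
/- Let E be a finite-dimensional real inner product space and A : E → E a self-adjoint positive definite linear map (⟨x, Ax⟩ > 0 for all x ≠ 0). Let T_1,…,T_d be subspaces of E and T = T_1 + ⋯ + T_d. For each i let Q_i : E → E be the A-orthogonal projection onto T_i, i.e., the linear map with Q_i x ∈ T_i and ⟨t, A(x − Q_i x)⟩ = 0 for all t ∈ T_i and all x ∈ E. Then the multiplicative Schwarz error operator M = (I − Q_d) ∘ ⋯ ∘ (I − Q_1) maps T into T, and for every nonzero h ∈ T one has ⟨Mh, A(Mh)⟩ < ⟨h, Ah⟩; in particular the operator norm of the restriction of M to T with respect to the norm ‖h‖_A = √⟨h, Ah⟩ is strictly less than 1. -/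
private lemma foldl_comp_aux {E : Type*} [NormedAddCommGroup E] [InnerProductSpace ℝ E]
    (l : List (E →ₗ[ℝ] E)) : ∀ acc : E →ₗ[ℝ] E,
    l.foldl (fun (acc q : E →ₗ[ℝ] E) => q.comp acc) acc
      = (l.foldl (fun (acc q : E →ₗ[ℝ] E) => q.comp acc) LinearMap.id).comp acc := by
  induction l with
  | nil => intro acc; simp
  | cons a l ih =>
    intro acc
    simp only [List.foldl_cons]
    rw [ih (a.comp acc), ih (a.comp LinearMap.id)]
    simp [LinearMap.comp_assoc]

private lemma step_aux {E : Type*} [NormedAddCommGroup E] [InnerProductSpace ℝ E]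
    (A : E →ₗ[ℝ] E)
    (hAsym : ∀ x y : E, inner ℝ (A x) y = (inner ℝ x (A y) : ℝ))
    (T0 : Submodule ℝ E) (Q0 : E →ₗ[ℝ] E)
    (hmem : ∀ x : E, Q0 x ∈ T0)
    (horth : ∀ x : E, ∀ t ∈ T0, inner ℝ t (A (x - Q0 x)) = (0 : ℝ)) (x : E) :
    (inner ℝ (x - Q0 x) (A (x - Q0 x)) : ℝ)
      = (inner ℝ x (A x) : ℝ) - inner ℝ (Q0 x) (A (Q0 x)) := by
  have h1 : inner ℝ (Q0 x) (A (x - Q0 x)) = (0 : ℝ) := horth x _ (hmem x)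
  have h2 : (inner ℝ x (A (Q0 x)) : ℝ) = inner ℝ (Q0 x) (A x) := by
    rw [← hAsym]; exact real_inner_comm _ _
  simp only [map_sub, inner_sub_left, inner_sub_right] at h1 ⊢
  linarith

private lemma master_aux {E : Type*} [NormedAddCommGroup E] [InnerProductSpace ℝ E]
    (A : E →ₗ[ℝ] E)
    (hAsym : ∀ x y : E, inner ℝ (A x) y = (inner ℝ x (A y) : ℝ))
    (hApos : ∀ x : E, x ≠ 0 → (0 : ℝ) < inner ℝ x (A x)) :
    ∀ (d : ℕ) (T : Fin d → Submodule ℝ E) (Q : Fin d → (E →ₗ[ℝ] E)),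
      (∀ i, ∀ x : E, Q i x ∈ T i) →
      (∀ i, ∀ x : E, ∀ t ∈ T i, inner ℝ t (A (x - Q i x)) = (0 : ℝ)) →
      ∀ h : E,
        ((List.ofFn fun i => LinearMap.id - Q i).foldl
            (fun (acc q : E →ₗ[ℝ] E) => q.comp acc) LinearMap.id) h - h
            ∈ (⨆ i, T i : Submodule ℝ E) ∧
        (inner ℝ (((List.ofFn fun i => LinearMap.id - Q i).foldl
            (fun (acc q : E →ₗ[ℝ] E) => q.comp acc) LinearMap.id) h)
            (A (((List.ofFn fun i => LinearMap.id - Q i).foldl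
            (fun (acc q : E →ₗ[ℝ] E) => q.comp acc) LinearMap.id) h)) : ℝ)
            ≤ inner ℝ h (A h) ∧
        ((inner ℝ (((List.ofFn fun i => LinearMap.id - Q i).foldl
            (fun (acc q : E →ₗ[ℝ] E) => q.comp acc) LinearMap.id) h)
            (A (((List.ofFn fun i => LinearMap.id - Q i).foldl
            (fun (acc q : E →ₗ[ℝ] E) => q.comp acc) LinearMap.id) h)) : ℝ)
            = inner ℝ h (A h) →
          ((List.ofFn fun i => LinearMap.id - Q i).foldl
            (fun (acc q : E →ₗ[ℝ] E) => q.comp acc) LinearMap.id) h = h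
            ∧ ∀ i, Q i h = 0) := by
  have hnonneg : ∀ x : E, (0 : ℝ) ≤ inner ℝ x (A x) := by
    intro x
    by_cases hx : x = 0
    · simp [hx]
    · exact (hApos x hx).le
  have hzero : ∀ x : E, (inner ℝ x (A x) : ℝ) = 0 → x = 0 := by
    intro x hx
    by_contra hne
    exact absurd hx (hApos x hne).ne'
  intro d
  induction d with
  | zero =>
    intro T Q _ _ h
    refine ⟨by simp, le_refl _, fun _ => ⟨by simp, fun i => i.elim0⟩⟩
  | succ d ih =>
    intro T Q hQmem hQorth h
    -- decompose
    have hsplit : (List.ofFn fun i : Fin (d + 1) => LinearMap.id - Q i)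
        = (LinearMap.id - Q 0) :: (List.ofFn fun i : Fin d => LinearMap.id - Q i.succ) := by
      rw [List.ofFn_succ]
    set M' : E →ₗ[ℝ] E := (List.ofFn fun i : Fin d => LinearMap.id - Q i.succ).foldl
        (fun (acc q : E →ₗ[ℝ] E) => q.comp acc) LinearMap.id with hM'
    have hMdef : (List.ofFn fun i : Fin (d + 1) => LinearMap.id - Q i).foldl
        (fun (acc q : E →ₗ[ℝ] E) => q.comp acc) LinearMap.id
        = M'.comp (LinearMap.id - Q 0) := by
      rw [hsplit, List.foldl_cons, foldl_comp_aux]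
      simp
      rfl
    set y : E := h - Q 0 h with hy
    have happ : ((List.ofFn fun i : Fin (d + 1) => LinearMap.id - Q i).foldl
        (fun (acc q : E →ₗ[ℝ] E) => q.comp acc) LinearMap.id) h = M' y := by
      rw [hMdef]
      simp only [LinearMap.comp_apply, LinearMap.sub_apply, LinearMap.id_apply, ← hy]
    obtain ⟨ih1, ih2, ih3⟩ := ih (fun i => T i.succ) (fun i => Q i.succ)
      (fun i x => hQmem i.succ x) (fun i x => hQorth i.succ x) y
    have hsuple : (⨆ i : Fin d, T i.succ : Submodule ℝ E) ≤ ⨆ i : Fin (d + 1), T i :=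
      iSup_le fun i => le_iSup _ i.succ
    have hstep : (inner ℝ y (A y) : ℝ) = inner ℝ h (A h) - inner ℝ (Q 0 h) (A (Q 0 h)) :=
      step_aux A hAsym (T 0) (Q 0) (hQmem 0) (hQorth 0) h
    rw [happ]
    refine ⟨?_, ?_, ?_⟩
    · -- membership of M' y - h
      have h1 : M' y - y ∈ (⨆ i : Fin (d + 1), T i : Submodule ℝ E) := hsuple ih1
      have h2 : y - h ∈ (⨆ i : Fin (d + 1), T i : Submodule ℝ E) := by
        have : y - h = -(Q 0 h) := by simp [hy]
        rw [this]
        exact Submodule.neg_mem _ (le_iSup T 0 (hQmem 0 h))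
      have := Submodule.add_mem _ h1 h2
      simpa using this
    · calc (inner ℝ (M' y) (A (M' y)) : ℝ) ≤ inner ℝ y (A y) := ih2
        _ ≤ inner ℝ h (A h) := by
            have := hnonneg (Q 0 h); linarith
    · intro heq
      have hle1 : (inner ℝ (M' y) (A (M' y)) : ℝ) ≤ inner ℝ y (A y) := ih2
      have hle2 : (inner ℝ y (A y) : ℝ) ≤ inner ℝ h (A h) := by
        have := hnonneg (Q 0 h); linarith
      have heq2 : (inner ℝ y (A y) : ℝ) = inner ℝ h (A h) := le_antisymm hle2 (by linarith)
      have hQ0 : Q 0 h = 0 := by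
        apply hzero
        linarith [hstep, heq2]
      have hyh : y = h := by simp [hy, hQ0]
      obtain ⟨hMy, hQs⟩ := ih3 (by rw [heq, heq2])
      rw [hyh] at hMy hQs
      refine ⟨by rw [hyh, hMy], fun i => ?_⟩
      refine Fin.cases ?_ ?_ i
      · exact hQ0
      · exact fun j => hQs j

/-- Multiplicative Schwarz contraction: for a self-adjoint positive definite
`A` on a finite-dimensional real inner ℝ product space and `A`-orthogonal projections `Q i` onto
subspaces `T i`, the error operator `M = (I - Q_d) ∘ ⋯ ∘ (I - Q_1)` maps `T = T_1 + ⋯ + T_d`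
into itself, strictly decreases the `A`-norm of every nonzero `h ∈ T`, and has `A`-operator
norm `< 1` on `T`. -/
theorem stmt8
    {E : Type*} [NormedAddCommGroup E] [InnerProductSpace ℝ E] [FiniteDimensional ℝ E]
    (A : E →ₗ[ℝ] E)
    (hAsym : ∀ x y : E, inner ℝ (A x) y = (inner ℝ x (A y) : ℝ))
    (hApos : ∀ x : E, x ≠ 0 → (0 : ℝ) < inner ℝ x (A x))
    (d : ℕ) (T : Fin d → Submodule ℝ E) (Q : Fin d → (E →ₗ[ℝ] E))
    (hQmem : ∀ i, ∀ x : E, Q i x ∈ T i)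
    (hQorth : ∀ i, ∀ x : E, ∀ t ∈ T i, inner ℝ t (A (x - Q i x)) = (0 : ℝ))
    (M : E →ₗ[ℝ] E)
    (hM : M = (List.ofFn fun i => LinearMap.id - Q i).foldl
        (fun (acc q : E →ₗ[ℝ] E) => q.comp acc) LinearMap.id) :
    (∀ h ∈ (⨆ i, T i : Submodule ℝ E), M h ∈ (⨆ i, T i : Submodule ℝ E)) ∧
      (∀ h ∈ (⨆ i, T i : Submodule ℝ E), h ≠ 0 →
        (inner ℝ (M h) (A (M h)) : ℝ) < inner ℝ h (A h)) ∧
      (∃ c : ℝ, 0 ≤ c ∧ c < 1 ∧ ∀ h ∈ (⨆ i, T i : Submodule ℝ E),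
        Real.sqrt (inner ℝ (M h) (A (M h))) ≤ c * Real.sqrt (inner ℝ h (A h))) := by
  have hnonneg : ∀ x : E, (0 : ℝ) ≤ inner ℝ x (A x) := by
    intro x
    by_cases hx : x = 0
    · simp [hx]
    · exact (hApos x hx).le
  have key := master_aux A hAsym hApos d T Q hQmem hQorth
  rw [← hM] at key
  set S : Submodule ℝ E := ⨆ i, T i with hS
  -- part 1
  have part1 : ∀ h ∈ S, M h ∈ S := by
    intro h hh
    have := (key h).1
    have : M h = (M h - h) + h := by abel
    rw [this]
    exact Submodule.add_mem _ (key h).1 hh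
  -- part 2
  have part2 : ∀ h ∈ S, h ≠ 0 → (inner ℝ (M h) (A (M h)) : ℝ) < inner ℝ h (A h) := by
    intro h hh hne
    obtain ⟨_, hle, heqc⟩ := key h
    rcases lt_or_eq_of_le hle with hlt | heq
    · exact hlt
    · exfalso
      obtain ⟨_, hQz⟩ := heqc heq
      -- then inner t (A h) = 0 for all t in S
      have horth : ∀ t ∈ S, (inner ℝ t (A h) : ℝ) = 0 := by
        intro t ht
        have hker : S ≤ LinearMap.ker (innerₛₗ ℝ (A h)) := by
          apply iSup_le
          intro i u hu
          have h0 := hQorth i h u hu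
          rw [hQz i, sub_zero] at h0
          have : (inner ℝ (A h) u : ℝ) = 0 := by rw [real_inner_comm]; exact h0
          simpa [LinearMap.mem_ker] using this
        have := hker ht
        rw [real_inner_comm]
        simpa [LinearMap.mem_ker] using this
      have := horth h hh
      exact absurd this (hApos h hne).ne'
  refine ⟨part1, part2, ?_⟩
  by_cases hbot : S = ⊥
  · refine ⟨0, le_refl 0, one_pos, ?_⟩
    intro h hh
    rw [hbot, Submodule.mem_bot] at hh
    subst hh
    simp
  · obtain ⟨h0, h0S, h0ne⟩ := (Submodule.ne_bot_iff S).mp hbot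
    set K : Set E := (S : Set E) ∩ Metric.sphere 0 1 with hK
    have hKc : IsCompact K :=
      (isCompact_sphere (0 : E) 1).inter_left (Submodule.closed_of_finiteDimensional S)
    have hKne : K.Nonempty := by
      refine ⟨‖h0‖⁻¹ • h0, ?_, ?_⟩
      · exact Submodule.smul_mem S _ h0S
      · rw [mem_sphere_zero_iff_norm]
        exact norm_smul_inv_norm h0ne
    set g : E → ℝ := fun x =>
      Real.sqrt (inner ℝ (M x) (A (M x))) / Real.sqrt (inner ℝ x (A x)) with hg
    have hcont1 : Continuous fun x : E => (inner ℝ (M x) (A (M x)) : ℝ) :=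
      (M.continuous_of_finiteDimensional).inner ((A.comp M).continuous_of_finiteDimensional)
    have hcont2 : Continuous fun x : E => (inner ℝ x (A x) : ℝ) :=
      continuous_id.inner A.continuous_of_finiteDimensional
    have hKne0 : ∀ x ∈ K, x ≠ 0 := by
      intro x hx
      have : ‖x‖ = 1 := mem_sphere_zero_iff_norm.mp hx.2
      intro h0'
      rw [h0', norm_zero] at this
      norm_num at this
    have hgcont : ContinuousOn g K := by
      apply ContinuousOn.div
      · exact (Real.continuous_sqrt.comp hcont1).continuousOn
      · exact (Real.continuous_sqrt.comp hcont2).continuousOn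
      · intro x hx
        exact (Real.sqrt_pos.mpr (hApos x (hKne0 x hx))).ne'
    obtain ⟨u, huK, hmax⟩ := hKc.exists_isMaxOn hKne hgcont
    have hune : u ≠ 0 := hKne0 u huK
    have huS : u ∈ S := huK.1
    have hdenu : (0 : ℝ) < Real.sqrt (inner ℝ u (A u)) :=
      Real.sqrt_pos.mpr (hApos u hune)
    refine ⟨g u, ?_, ?_, ?_⟩
    · exact div_nonneg (Real.sqrt_nonneg _) (Real.sqrt_nonneg _)
    · rw [hg]
      simp only
      rw [div_lt_one hdenu]
      exact Real.sqrt_lt_sqrt (hnonneg _) (part2 u huS hune)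
    · intro h hh
      by_cases hne : h = 0
      · subst hne
        simp [div_nonneg (Real.sqrt_nonneg _) (Real.sqrt_nonneg _),
          mul_nonneg (div_nonneg (Real.sqrt_nonneg _) (Real.sqrt_nonneg _)) (Real.sqrt_nonneg _)]
      · have hane : ‖h‖ ≠ 0 := norm_ne_zero_iff.mpr hne
        set u' : E := ‖h‖⁻¹ • h with hu'
        have hu'K : u' ∈ K := by
          refine ⟨Submodule.smul_mem S _ hh, ?_⟩
          rw [mem_sphere_zero_iff_norm]
          exact norm_smul_inv_norm hne
        have hgle : g u' ≤ g u := hmax hu'K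
        have hdenu' : (0 : ℝ) < Real.sqrt (inner ℝ u' (A u')) :=
          Real.sqrt_pos.mpr (hApos u' (hKne0 u' hu'K))
        have hnum : Real.sqrt (inner ℝ (M u') (A (M u')))
            ≤ g u * Real.sqrt (inner ℝ u' (A u')) := by
          rw [← div_le_iff₀ hdenu']
          exact hgle
        have hhu : (‖h‖ : ℝ) • u' = h := smul_inv_smul₀ hane h
        have hscale : ∀ x : E, Real.sqrt (inner ℝ ((‖h‖ : ℝ) • x) (A ((‖h‖ : ℝ) • x)))
            = ‖h‖ * Real.sqrt (inner ℝ x (A x)) := by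
          intro x
          rw [map_smul, real_inner_smul_left, real_inner_smul_right]
          rw [show ‖h‖ * (‖h‖ * (inner ℝ x (A x) : ℝ)) = ‖h‖ ^ 2 * inner ℝ x (A x) by ring]
          rw [Real.sqrt_mul (sq_nonneg _), Real.sqrt_sq (norm_nonneg h)]
        rw [← hhu, map_smul, hscale (M u'), hscale u']
        calc ‖h‖ * Real.sqrt (inner ℝ (M u') (A (M u')))
            ≤ ‖h‖ * (g u * Real.sqrt (inner ℝ u' (A u'))) :=
              mul_le_mul_of_nonneg_left hnum (norm_nonneg h)
          _ = g u * (‖h‖ * Real.sqrt (inner ℝ u' (A u'))) := by ring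
end

section
/- Let E be a finite-dimensional real inner product space and A : E → E a self-adjoint positive definite linear map. Let T_1, T_2 be subspaces of E, let Q_1, Q_2 be the A-orthogonal projections onto T_1 and T_2, and assume Q_1 ∘ Q_2 = Q_2 ∘ Q_1. Let P be the (standard) orthogonal projection onto T_1 + T_2. Let B_1, B_2 : E → E be linear maps with range(B_i) ⊆ T_i, and let N_1, N_2 : E → E be linear maps with N_i t = 0 for all t ∈ T_i. Define S' = [(I − Q_2) − B_2 ∘ N_2] ∘ [(I − Q_1) − B_1 ∘ N_1]. Then the spectral radius of S' ∘ P equals the spectral radius of B_2 ∘ N_2 ∘ B_1 ∘ N_1 ∘ P. -/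
open TensorProduct

lemma specRadius_eq_of_nonzero_spectrum_eq {𝕜 A : Type*} [NormedField 𝕜] [Ring A] [Algebra 𝕜 A]
    {a b : A} (h : spectrum 𝕜 a \ {0} = spectrum 𝕜 b \ {0}) :
    spectralRadius 𝕜 a = spectralRadius 𝕜 b := by
  have key : ∀ S : Set 𝕜, (⨆ k ∈ S, (‖k‖₊ : ENNReal)) = ⨆ k ∈ S \ {0}, (‖k‖₊ : ENNReal) := by
    intro S
    apply le_antisymm
    · refine iSup₂_le fun k hk => ?_
      rcases eq_or_ne k 0 with rfl | h0
      · simp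
      · exact le_iSup₂_of_le k ⟨hk, by simpa using h0⟩ le_rfl
    · exact iSup₂_le fun k hk => le_iSup₂_of_le k hk.1 le_rfl
  unfold spectralRadius
  rw [key (spectrum 𝕜 a), h, ← key]

/-- With commuting `A`-orthogonal projections `Q₁, Q₂` onto `T₁, T₂`, the
standard orthogonal projection `P` onto `T₁ + T₂`, maps `B_i` with range in `T_i` and maps
`N_i` vanishing on `T_i`, the operator `S' = [(I - Q₂) - B₂N₂] ∘ [(I - Q₁) - B₁N₁]` satisfies
`ρ(S' ∘ P) = ρ(B₂ ∘ N₂ ∘ B₁ ∘ N₁ ∘ P)` (spectral radii of the complexifications, i.e. maxima of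
moduli of complex eigenvalues). -/
theorem stmt10
    {E : Type*} [NormedAddCommGroup E] [InnerProductSpace ℝ E] [FiniteDimensional ℝ E]
    (A : E →ₗ[ℝ] E)
    (hAsym : ∀ x y : E, inner ℝ (A x) y = (inner ℝ x (A y) : ℝ))
    (hApos : ∀ x : E, x ≠ 0 → (0 : ℝ) < inner ℝ x (A x))
    (T₁ T₂ : Submodule ℝ E) (Q₁ Q₂ : E →ₗ[ℝ] E)
    (hQ₁mem : ∀ x : E, Q₁ x ∈ T₁) (hQ₂mem : ∀ x : E, Q₂ x ∈ T₂)
    (hQ₁orth : ∀ x : E, ∀ t ∈ T₁, inner ℝ t (A (x - Q₁ x)) = (0 : ℝ))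
    (hQ₂orth : ∀ x : E, ∀ t ∈ T₂, inner ℝ t (A (x - Q₂ x)) = (0 : ℝ))
    (hcomm : Q₁.comp Q₂ = Q₂.comp Q₁)
    (P : E →ₗ[ℝ] E)
    (hPmem : ∀ x : E, P x ∈ T₁ ⊔ T₂)
    (hPorth : ∀ x : E, ∀ t ∈ T₁ ⊔ T₂, inner ℝ t (x - P x) = (0 : ℝ))
    (B₁ B₂ N₁ N₂ : E →ₗ[ℝ] E)
    (hB₁ : ∀ x : E, B₁ x ∈ T₁) (hB₂ : ∀ x : E, B₂ x ∈ T₂)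
    (hN₁ : ∀ t ∈ T₁, N₁ t = 0) (hN₂ : ∀ t ∈ T₂, N₂ t = 0)
    (S' : E →ₗ[ℝ] E)
    (hS' : S' = ((LinearMap.id - Q₂) - B₂.comp N₂).comp ((LinearMap.id - Q₁) - B₁.comp N₁)) :
    spectralRadius ℂ (LinearMap.baseChange ℂ (S'.comp P) : Module.End ℂ (ℂ ⊗[ℝ] E)) =
      spectralRadius ℂ (LinearMap.baseChange ℂ (B₂.comp (N₂.comp (B₁.comp (N₁.comp P)))) :
        Module.End ℂ (ℂ ⊗[ℝ] E)) := by
  classical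
  -- Q_i fixes T_i
  have hfix : ∀ (Q : E →ₗ[ℝ] E) (T : Submodule ℝ E), (∀ x, Q x ∈ T) →
      (∀ x : E, ∀ t ∈ T, inner ℝ t (A (x - Q x)) = (0 : ℝ)) → ∀ t ∈ T, Q t = t := by
    intro Q T hmem horth t ht
    by_contra hne
    have h0 : t - Q t ≠ 0 := by
      intro h
      exact hne (sub_eq_zero.mp h).symm
    have h1 := hApos (t - Q t) h0
    have h2 := horth t (t - Q t) (Submodule.sub_mem T ht (hmem t))
    rw [h2] at h1
    exact lt_irrefl _ h1
  have hQ₁fix : ∀ t ∈ T₁, Q₁ t = t := hfix Q₁ T₁ hQ₁mem hQ₁orth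
  have hQ₂fix : ∀ t ∈ T₂, Q₂ t = t := hfix Q₂ T₂ hQ₂mem hQ₂orth
  -- P fixes T₁ ⊔ T₂
  have hPfix : ∀ t ∈ T₁ ⊔ T₂, P t = t := by
    intro t ht
    have h2 := hPorth t (t - P t) (Submodule.sub_mem _ ht (hPmem t))
    have : t - P t = 0 := inner_self_eq_zero.mp h2
    exact (sub_eq_zero.mp this).symm
  have hQQ : ∀ x : E, Q₁ (Q₂ x) = Q₂ (Q₁ x) := fun x => by
    simpa using LinearMap.congr_fun hcomm x
  -- key memberships
  have hmemT₂ : ∀ x : E, P x - Q₁ (P x) ∈ T₂ := by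
    intro x
    obtain ⟨t₁, ht₁, t₂, ht₂, hsum⟩ := Submodule.mem_sup.mp (hPmem x)
    have e1 : P x - Q₁ (P x) = t₂ - Q₁ t₂ := by
      rw [← hsum, map_add, hQ₁fix t₁ ht₁]; abel
    have e2 : Q₂ (t₂ - Q₁ t₂) = t₂ - Q₁ t₂ := by
      rw [map_sub, hQ₂fix t₂ ht₂, ← hQQ, hQ₂fix t₂ ht₂]
    rw [e1, ← e2]
    exact hQ₂mem _
  have hmemT₁ : ∀ x : E, P x - Q₂ (P x) ∈ T₁ := by
    intro x
    obtain ⟨t₁, ht₁, t₂, ht₂, hsum⟩ := Submodule.mem_sup.mp (hPmem x)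
    have e1 : P x - Q₂ (P x) = t₁ - Q₂ t₁ := by
      rw [← hsum, map_add, hQ₂fix t₂ ht₂]; abel
    have e2 : Q₁ (t₁ - Q₂ t₁) = t₁ - Q₂ t₁ := by
      rw [map_sub, hQ₁fix t₁ ht₁, hQQ, hQ₁fix t₁ ht₁]
    rw [e1, ← e2]
    exact hQ₁mem _
  -- notation
  set Lop : Module.End ℝ E := (LinearMap.id - Q₂) - B₂.comp N₂ with hLop
  set W : Module.End ℝ E := B₁.comp (N₁.comp P) with hW
  set G : Module.End ℝ E := B₁.comp (N₁.comp (B₂.comp N₂)) with hG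
  -- operator identities
  have h1 : S'.comp P = -(Lop * W) := by
    ext x
    have hz2 : Q₂ (P x - Q₁ (P x)) = P x - Q₁ (P x) := hQ₂fix _ (hmemT₂ x)
    have hz2' : N₂ (P x - Q₁ (P x)) = 0 := hN₂ _ (hmemT₂ x)
    have key : ∀ z w : E, Q₂ z = z → N₂ z = 0 →
        (z - w) - Q₂ (z - w) - B₂ (N₂ (z - w)) = -(w - Q₂ w - B₂ (N₂ w)) := by
      intro z w hq hn
      rw [map_sub Q₂, map_sub N₂, hq, hn, zero_sub, map_neg]
      abel
    simp only [hS', hLop, hW, Module.End.mul_eq_comp, LinearMap.comp_apply, LinearMap.sub_apply,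
      LinearMap.id_apply, LinearMap.neg_apply]
    exact key _ _ hz2 hz2'
  have h2 : W * Lop * P = -(G * P) := by
    ext x
    have hPP : P (P x) = P x := hPfix _ (hPmem x)
    have hPQ₂ : P (Q₂ (P x)) = Q₂ (P x) :=
      hPfix _ (Submodule.mem_sup_right (hQ₂mem _))
    have hPB₂ : P (B₂ (N₂ (P x))) = B₂ (N₂ (P x)) :=
      hPfix _ (Submodule.mem_sup_right (hB₂ _))
    have hN₁z : N₁ (P x - Q₂ (P x)) = 0 := hN₁ _ (hmemT₁ x)
    simp only [hLop, hW, hG, Module.End.mul_eq_comp, LinearMap.comp_apply, LinearMap.sub_apply,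
      LinearMap.id_apply, LinearMap.neg_apply]
    rw [map_sub P, map_sub P, hPP, hPQ₂, hPB₂]
    have : (P x - Q₂ (P x)) - B₂ (N₂ (P x)) = P x - Q₂ (P x) - B₂ (N₂ (P x)) := rfl
    rw [show P x - Q₂ (P x) - B₂ (N₂ (P x)) = (P x - Q₂ (P x)) - B₂ (N₂ (P x)) from rfl,
      map_sub N₁, hN₁z, zero_sub, map_neg]
  have h3 : P * W = W := by
    ext x
    simp only [hW, Module.End.mul_eq_comp, LinearMap.comp_apply]
    exact hPfix _ (Submodule.mem_sup_left (hB₁ _))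
  have h5 : P * G = G := by
    ext x
    simp only [hG, Module.End.mul_eq_comp, LinearMap.comp_apply]
    exact hPfix _ (Submodule.mem_sup_left (hB₁ _))
  have h6 : B₂.comp (N₂.comp (B₁.comp (N₁.comp P))) = (B₂.comp N₂) * W := by
    ext x; simp [hW, Module.End.mul_eq_comp]
  have h7 : W * (B₂.comp N₂) = G := by
    ext x
    simp only [hW, hG, Module.End.mul_eq_comp, LinearMap.comp_apply]
    congr 1
    congr 1
    exact hPfix _ (Submodule.mem_sup_right (hB₂ _))
  -- base change
  set φ := Module.End.baseChangeHom ℝ ℂ E with hφ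
  have hφ1 : ∀ a : Module.End ℝ E, φ a = LinearMap.baseChange ℂ a := fun a => rfl
  have e3 : W * (-Lop) = P * (W * (-Lop)) := by rw [← mul_assoc, h3]
  have e4 : (W * (-Lop)) * P = G * P := by rw [mul_neg, neg_mul, h2, neg_neg]
  have h1' : S'.comp P = (-Lop) * W := by rw [h1, neg_mul]
  have main : spectrum ℂ (φ (S'.comp P)) \ {0}
      = spectrum ℂ (φ (B₂.comp (N₂.comp (B₁.comp (N₁.comp P))))) \ {0} := by
    calc spectrum ℂ (φ (S'.comp P)) \ {0}
        = spectrum ℂ (φ (-Lop) * φ W) \ {0} := by rw [h1', map_mul]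
      _ = spectrum ℂ (φ W * φ (-Lop)) \ {0} := spectrum.nonzero_mul_comm _ _
      _ = spectrum ℂ (φ P * φ (W * (-Lop))) \ {0} := by
            rw [← map_mul, ← map_mul, ← e3]
      _ = spectrum ℂ (φ (W * (-Lop)) * φ P) \ {0} := spectrum.nonzero_mul_comm _ _
      _ = spectrum ℂ (φ G * φ P) \ {0} := by rw [← map_mul, e4, map_mul]
      _ = spectrum ℂ (φ P * φ G) \ {0} := spectrum.nonzero_mul_comm _ _
      _ = spectrum ℂ (φ G) \ {0} := by rw [← map_mul, h5]
      _ = spectrum ℂ (φ W * φ (B₂.comp N₂)) \ {0} := by rw [← map_mul, h7]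
      _ = spectrum ℂ (φ (B₂.comp N₂) * φ W) \ {0} :=
            (spectrum.nonzero_mul_comm _ _).symm
      _ = spectrum ℂ (φ (B₂.comp (N₂.comp (B₁.comp (N₁.comp P))))) \ {0} := by
            rw [← map_mul, ← h6]
  rw [← hφ1, ← hφ1]
  exact specRadius_eq_of_nonzero_spectrum_eq main
end

section
/- Let 1 ≤ k < r, let u_1,…,u_k ∈ ℝ^m be orthonormal, let v_{k+1},…,v_r ∈ ℝ^n be orthonormal, and let σ_1 ≥ ⋯ ≥ σ_k > σ_{k+1} ≥ ⋯ ≥ σ_r ≥ 0 with σ_k > 0. Set C = Σ_{i=1}^{k} σ_i^{-2} u_i u_iᵀ ∈ ℝ^{m×m} and D = Σ_{j=k+1}^{r} σ_j² v_j v_jᵀ ∈ ℝ^{n×n}, and define the linear map G on ℝ^{m×n} by G(H) = C H D. Then: (a) for every 1 ≤ i ≤ k and k+1 ≤ j ≤ r, the rank-one matrix u_i v_jᵀ is an eigenvector of G with eigenvalue σ_j²/σ_i²; (b) the spectral radius of G (equivalently, since G is self-adjoint and positive semidefinite with respect to the Frobenius inner product, its operator norm) equals (σ_{k+1}/σ_k)².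 -/
open Matrix

/-- Frobenius norm of a real matrix. -/
noncomputable def fnorm {m n : ℕ} (X : Matrix (Fin m) (Fin n) ℝ) : ℝ :=
  Real.sqrt (∑ i, ∑ j, (X i j) ^ 2)

/-- The linear map sending a matrix to the corresponding Euclidean-space vector. -/
noncomputable def toE {m n : ℕ} :
    Matrix (Fin m) (Fin n) ℝ →ₗ[ℝ] EuclideanSpace ℝ (Fin m × Fin n) where
  toFun X := (WithLp.equiv 2 _).symm (fun p => X p.1 p.2)
  map_add' X Y := rfl
  map_smul' c X := rfl

lemma inner_toE {m n : ℕ} (X Y : Matrix (Fin m) (Fin n) ℝ) :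
    (inner ℝ (toE X) (toE Y) : ℝ) = ∑ a, ∑ b, X a b * Y a b := by
  simp [toE, PiLp.inner_apply, RCLike.inner_apply, Fintype.sum_prod_type, mul_comm]

lemma norm_toE {m n : ℕ} (X : Matrix (Fin m) (Fin n) ℝ) :
    ‖toE X‖ = fnorm X := by
  rw [EuclideanSpace.norm_eq, fnorm]
  congr 1
  rw [Fintype.sum_prod_type]
  simp [toE, Real.norm_eq_abs, sq_abs]

lemma fnorm_smul {m n : ℕ} (c : ℝ) (X : Matrix (Fin m) (Fin n) ℝ) :
    fnorm (c • X) = |c| * fnorm X := by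
  rw [← norm_toE, ← norm_toE, toE.map_smul, norm_smul, Real.norm_eq_abs]

lemma vecMulVec_mul_mul {m n : ℕ} (x : Fin m → ℝ) (y : Fin m → ℝ) (H : Matrix (Fin m) (Fin n) ℝ)
    (z w : Fin n → ℝ) :
    vecMulVec x y * H * vecMulVec z w = (∑ c, ∑ d, y c * H c d * z d) • vecMulVec x w := by
  ext a b
  simp only [mul_apply, vecMulVec_apply, Matrix.smul_apply, smul_eq_mul, Finset.sum_mul, Finset.mul_sum]
  rw [Finset.sum_comm]
  exact Finset.sum_congr rfl fun c _ => Finset.sum_congr rfl fun d _ => by ring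

/-- With `C = Σ_{i=1}^k σ_i⁻² u_i u_iᵀ` and `D = Σ_{j=k+1}^r σ_j² v_j v_jᵀ`
(`u_i`, `v_j` orthonormal, `σ_1 ≥ ⋯ ≥ σ_r ≥ 0`, `σ_k > σ_{k+1}`, `σ_k > 0`), the map
`G(H) = C H D` has each `u_i v_jᵀ` as eigenvector with eigenvalue `σ_j²/σ_i²`, and its spectral
radius — equivalently, since `G` is self-adjoint and positive semidefinite w.r.t. the Frobenius
inner product, its operator norm — equals `(σ_{k+1}/σ_k)²`. -/
theorem stmt12 {m n : ℕ} (k r : ℕ) (hk : 1 ≤ k) (hkr : k < r)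
    (u : ℕ → Fin m → ℝ) (v : ℕ → Fin n → ℝ) (σ : ℕ → ℝ)
    (hu : ∀ i ∈ Finset.Icc 1 k, ∀ j ∈ Finset.Icc 1 k,
      ∑ a, u i a * u j a = if i = j then (1 : ℝ) else 0)
    (hv : ∀ i ∈ Finset.Icc (k+1) r, ∀ j ∈ Finset.Icc (k+1) r,
      ∑ a, v i a * v j a = if i = j then (1 : ℝ) else 0)
    (hmono : ∀ i ∈ Finset.Icc 1 r, ∀ j ∈ Finset.Icc 1 r, i ≤ j → σ j ≤ σ i)
    (hσr : 0 ≤ σ r) (hσk : 0 < σ k) (hgap : σ (k+1) < σ k)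
    (C : Matrix (Fin m) (Fin m) ℝ) (D : Matrix (Fin n) (Fin n) ℝ)
    (hC : C = ∑ i ∈ Finset.Icc 1 k, ((σ i) ^ 2)⁻¹ • vecMulVec (u i) (u i))
    (hD : D = ∑ j ∈ Finset.Icc (k+1) r, (σ j) ^ 2 • vecMulVec (v j) (v j)) :
    -- (a) eigenvectors
    (∀ i ∈ Finset.Icc 1 k, ∀ j ∈ Finset.Icc (k+1) r,
        C * vecMulVec (u i) (v j) * D = ((σ j) ^ 2 / (σ i) ^ 2) • vecMulVec (u i) (v j)) ∧
      -- (b) spectral radius = operator norm = (σ_{k+1}/σ_k)²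
      (∀ H : Matrix (Fin m) (Fin n) ℝ, fnorm (C * H * D) ≤ (σ (k+1) / σ k) ^ 2 * fnorm H) ∧
      (∃ H : Matrix (Fin m) (Fin n) ℝ, H ≠ 0 ∧
        fnorm (C * H * D) = (σ (k+1) / σ k) ^ 2 * fnorm H) := by
  classical
  set s : Finset ℕ := Finset.Icc 1 k with hs
  set t : Finset ℕ := Finset.Icc (k+1) r with ht
  have hks : k ∈ s := Finset.mem_Icc.2 ⟨hk, le_refl k⟩
  have hk1t : k + 1 ∈ t := Finset.mem_Icc.2 ⟨le_refl _, hkr⟩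
  -- basic σ facts
  have hσi_ge : ∀ i ∈ s, σ k ≤ σ i := by
    intro i hi
    obtain ⟨hi1, hi2⟩ := Finset.mem_Icc.1 hi
    exact hmono i (Finset.mem_Icc.2 ⟨hi1, by omega⟩) k (Finset.mem_Icc.2 ⟨hk, by omega⟩) hi2
  have hσi_pos : ∀ i ∈ s, 0 < σ i := fun i hi => lt_of_lt_of_le hσk (hσi_ge i hi)
  have hσj_le : ∀ j ∈ t, σ j ≤ σ (k+1) := by
    intro j hj
    obtain ⟨hj1, hj2⟩ := Finset.mem_Icc.1 hj
    exact hmono (k+1) (Finset.mem_Icc.2 ⟨by omega, by omega⟩)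
      j (Finset.mem_Icc.2 ⟨by omega, hj2⟩) hj1
  have hσj_nonneg : ∀ j ∈ t, 0 ≤ σ j := by
    intro j hj
    obtain ⟨hj1, hj2⟩ := Finset.mem_Icc.1 hj
    exact le_trans hσr (hmono j (Finset.mem_Icc.2 ⟨by omega, hj2⟩)
      r (Finset.mem_Icc.2 ⟨by omega, le_refl r⟩) hj2)
  have hσk1_nonneg : 0 ≤ σ (k+1) := hσj_nonneg (k+1) hk1t
  -- the general decomposition
  have expand : ∀ H : Matrix (Fin m) (Fin n) ℝ,
      C * H * D = ∑ p ∈ s ×ˢ t,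
        (((σ p.1) ^ 2)⁻¹ * (σ p.2) ^ 2 * (∑ c, ∑ d, u p.1 c * H c d * v p.2 d)) •
          vecMulVec (u p.1) (v p.2) := by
    intro H
    rw [Finset.sum_product, hC, hD, Matrix.sum_mul, Matrix.sum_mul]
    refine Finset.sum_congr rfl fun i hi => ?_
    rw [Matrix.mul_sum]
    refine Finset.sum_congr rfl fun j hj => ?_
    rw [Matrix.smul_mul, Matrix.smul_mul, Matrix.mul_smul, vecMulVec_mul_mul, smul_smul,
      smul_smul]
  -- part (a)
  have parta : ∀ i ∈ s, ∀ j ∈ t,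
      C * vecMulVec (u i) (v j) * D = ((σ j) ^ 2 / (σ i) ^ 2) • vecMulVec (u i) (v j) := by
    intro i hi j hj
    rw [expand]
    have hterm : ∀ p ∈ s ×ˢ t,
        (((σ p.1) ^ 2)⁻¹ * (σ p.2) ^ 2 *
            (∑ c, ∑ d, u p.1 c * (vecMulVec (u i) (v j)) c d * v p.2 d)) •
          vecMulVec (u p.1) (v p.2)
        = if p = (i, j) then ((σ j) ^ 2 / (σ i) ^ 2) • vecMulVec (u i) (v j) else 0 := by
      rintro ⟨i', j'⟩ hp
      obtain ⟨hi', hj'⟩ := Finset.mem_product.1 hp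
      have hcd : (∑ c, ∑ d, u i' c * (vecMulVec (u i) (v j)) c d * v j' d)
          = (∑ c, u i c * u i' c) * (∑ d, v j d * v j' d) := by
        rw [Finset.sum_mul_sum]
        exact Finset.sum_congr rfl fun c _ => Finset.sum_congr rfl fun d _ => by
          simp [vecMulVec_apply]; ring
      rw [hcd, hu i hi i' hi', hv j hj j' hj']
      by_cases h1 : i = i' <;> by_cases h2 : j = j' <;>
        simp [h1, h2, Prod.ext_iff, div_eq_mul_inv, mul_comm, eq_comm]
    rw [Finset.sum_congr rfl hterm, Finset.sum_ite_eq' (s ×ˢ t) (i, j),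
      if_pos (Finset.mk_mem_product hi hj)]
  refine ⟨parta, ?_, ?_⟩
  · -- part (b): upper bound
    intro H
    -- orthonormal family
    set T : Finset (ℕ × ℕ) := s ×ˢ t with hT
    set W : ↥T → EuclideanSpace ℝ (Fin m × Fin n) :=
      fun p => toE (vecMulVec (u p.1.1) (v p.1.2)) with hW
    have hWo : Orthonormal ℝ W := by
      rw [orthonormal_iff_ite]
      rintro ⟨⟨i, j⟩, hp⟩ ⟨⟨i', j'⟩, hq⟩
      obtain ⟨hi, hj⟩ := Finset.mem_product.1 hp
      obtain ⟨hi', hj'⟩ := Finset.mem_product.1 hq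
      rw [hW]
      rw [inner_toE]
      have hcd : (∑ a, ∑ b, (vecMulVec (u i) (v j)) a b * (vecMulVec (u i') (v j')) a b)
          = (∑ a, u i a * u i' a) * (∑ b, v j b * v j' b) := by
        rw [Finset.sum_mul_sum]
        exact Finset.sum_congr rfl fun a _ => Finset.sum_congr rfl fun b _ => by
          simp [vecMulVec_apply]; ring
      rw [hcd, hu i hi i' hi', hv j hj j' hj']
      by_cases h1 : i = i' <;> by_cases h2 : j = j' <;>
        simp [h1, h2, Subtype.ext_iff, Prod.ext_iff]
    set cij : ℕ → ℕ → ℝ := fun i j => ∑ c, ∑ d, u i c * H c d * v j d with hcij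
    set lam : ↥T → ℝ := fun p => ((σ p.1.1) ^ 2)⁻¹ * (σ p.1.2) ^ 2 * cij p.1.1 p.1.2 with hlam
    have hCHD : toE (C * H * D) = ∑ p : ↥T, lam p • W p := by
      rw [expand H, ← Finset.sum_coe_sort T, _root_.map_sum]
      exact Finset.sum_congr rfl fun p _ => toE.map_smul _ _
    have hnorm2 : ‖toE (C * H * D)‖ ^ 2 = ∑ p : ↥T, (lam p) ^ 2 := by
      rw [← real_inner_self_eq_norm_sq, hCHD, hWo.inner_sum lam lam]
      exact Finset.sum_congr rfl fun p _ => by simp [sq]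
    have hinner : ∀ p : ↥T, (inner ℝ (W p) (toE H) : ℝ) = cij p.1.1 p.1.2 := by
      intro p
      rw [hW, inner_toE]
      exact Finset.sum_congr rfl fun a _ => Finset.sum_congr rfl fun b _ => by
        simp [vecMulVec_apply]; ring
    have hbessel : ∑ p : ↥T, (cij p.1.1 p.1.2) ^ 2 ≤ ‖toE H‖ ^ 2 := by
      have := hWo.sum_inner_products_le (s := Finset.univ) (toE H)
      simpa [hinner, Real.norm_eq_abs, sq_abs] using this
    set ρ : ℝ := (σ (k+1) / σ k) ^ 2 with hρ
    have hρ0 : 0 ≤ ρ := sq_nonneg _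
    have hcoef : ∀ p : ↥T, (lam p) ^ 2 ≤ ρ ^ 2 * (cij p.1.1 p.1.2) ^ 2 := by
      rintro ⟨⟨i, j⟩, hp⟩
      obtain ⟨hi, hj⟩ := Finset.mem_product.1 hp
      have hipos := hσi_pos i hi
      have hratio : ((σ i) ^ 2)⁻¹ * (σ j) ^ 2 = (σ j / σ i) ^ 2 := by
        rw [div_pow]; ring
      have h1 : 0 ≤ σ j / σ i := div_nonneg (hσj_nonneg j hj) hipos.le
      have h2 : σ j / σ i ≤ σ (k+1) / σ k :=
        div_le_div₀ hσk1_nonneg (hσj_le j hj) hσk (hσi_ge i hi)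
      have h3 : (σ j / σ i) ^ 2 ≤ ρ := by
        rw [hρ]; exact pow_le_pow_left₀ h1 h2 2
      calc (lam ⟨(i, j), hp⟩) ^ 2 = ((σ j / σ i) ^ 2) ^ 2 * (cij i j) ^ 2 := by
            rw [hlam]; simp only [← hratio]; ring
        _ ≤ ρ ^ 2 * (cij i j) ^ 2 := by
            apply mul_le_mul_of_nonneg_right _ (sq_nonneg _)
            exact pow_le_pow_left₀ (sq_nonneg _) h3 2
    have hsq : fnorm (C * H * D) ^ 2 ≤ (ρ * fnorm H) ^ 2 := by
      rw [← norm_toE, hnorm2, mul_pow]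
      calc ∑ p : ↥T, (lam p) ^ 2 ≤ ∑ p : ↥T, ρ ^ 2 * (cij p.1.1 p.1.2) ^ 2 :=
            Finset.sum_le_sum fun p _ => hcoef p
        _ = ρ ^ 2 * ∑ p : ↥T, (cij p.1.1 p.1.2) ^ 2 := by rw [Finset.mul_sum]
        _ ≤ ρ ^ 2 * ‖toE H‖ ^ 2 := by
            exact mul_le_mul_of_nonneg_left hbessel (sq_nonneg ρ)
        _ = ρ ^ 2 * fnorm H ^ 2 := by rw [norm_toE]
    have h0 : 0 ≤ fnorm (C * H * D) := Real.sqrt_nonneg _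
    have h0' : 0 ≤ ρ * fnorm H := mul_nonneg hρ0 (Real.sqrt_nonneg _)
    calc fnorm (C * H * D) = Real.sqrt (fnorm (C * H * D) ^ 2) := (Real.sqrt_sq h0).symm
      _ ≤ Real.sqrt ((ρ * fnorm H) ^ 2) := Real.sqrt_le_sqrt hsq
      _ = ρ * fnorm H := Real.sqrt_sq h0'
  · -- part (b): the bound is attained
    refine ⟨vecMulVec (u k) (v (k+1)), ?_, ?_⟩
    · intro h
      have h1 : (∑ a, u k a * u k a) = 1 := by rw [hu k hks k hks]; simp
      have h2 : (∑ b, v (k+1) b * v (k+1) b) = 1 := by rw [hv (k+1) hk1t (k+1) hk1t]; simp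
      obtain ⟨a, ha⟩ : ∃ a, u k a ≠ 0 := by
        by_contra hc
        push_neg at hc
        simp [hc] at h1
      obtain ⟨b, hb⟩ : ∃ b, v (k+1) b ≠ 0 := by
        by_contra hc
        push_neg at hc
        simp [hc] at h2
      have := congrFun (congrFun h a) b
      simp [vecMulVec_apply] at this
      rcases this with h' | h' <;> [exact ha h'; exact hb h']
    · rw [parta k hks (k+1) hk1t, fnorm_smul]
      congr 1
      rw [abs_of_nonneg (div_nonneg (sq_nonneg _) (sq_nonneg _)), div_pow]
end

section
/- Let X̄ ∈ ℝ^{m×n} have rank k. Then there exist ε > 0 and L > 0 such that for every X ∈ ℝ^{m×n} of rank k with ‖X − X̄‖_F < ε, the orthogonal projection matrices onto the row spaces satisfy ‖Π_{row(X)} − Π_{row(X̄)}‖_F ≤ L ‖X − X̄‖_F, and likewise for the column spaces: ‖Π_{col(X)} − Π_{col(X̄)}‖_F ≤ L ‖X − X̄‖_F. -/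
open Matrix

/-- Matrix of the orthogonal projection of `ℝⁿ` onto the subspace `W`. -/
noncomputable def projMat {n : ℕ} (W : Submodule ℝ (EuclideanSpace ℝ (Fin n))) :
    Matrix (Fin n) (Fin n) ℝ :=
  fun i j => (Submodule.orthogonalProjectionOnto W (EuclideanSpace.single j 1) : EuclideanSpace ℝ (Fin n)) i

/-- Column space of a matrix (its range as a linear map). -/
noncomputable def colSpace {m n : ℕ} (X : Matrix (Fin m) (Fin n) ℝ) :
    Submodule ℝ (EuclideanSpace ℝ (Fin m)) :=
  LinearMap.range (Matrix.toEuclideanLin X)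

/-- Row space of a matrix. -/
noncomputable def rowSpace {m n : ℕ} (X : Matrix (Fin m) (Fin n) ℝ) :
    Submodule ℝ (EuclideanSpace ℝ (Fin n)) :=
  colSpace Xᵀ

attribute [local instance] Matrix.frobeniusSeminormedAddCommGroup
  Matrix.frobeniusNormedAddCommGroup Matrix.frobeniusNormedSpace

lemma fnorm_eq_norm {m n : ℕ} (X : Matrix (Fin m) (Fin n) ℝ) : fnorm X = ‖X‖ := by
  rw [Matrix.frobenius_norm_def, fnorm, Real.sqrt_eq_rpow]
  congr 1
  refine Finset.sum_congr rfl fun i _ => Finset.sum_congr rfl fun j _ => ?_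
  rw [Real.norm_eq_abs, Real.rpow_two, sq_abs]

lemma fnorm_transpose {m n : ℕ} (X : Matrix (Fin m) (Fin n) ℝ) : fnorm Xᵀ = fnorm X := by
  rw [fnorm, fnorm, Finset.sum_comm]
  rfl

lemma finrank_colSpace_eq_rank {m n : ℕ} (X : Matrix (Fin m) (Fin n) ℝ) :
    Module.finrank ℝ (colSpace X) = X.rank := by
  rw [Matrix.rank, colSpace]
  have h : LinearMap.range (toEuclideanLin X) =
      (LinearMap.range X.mulVecLin).map
        ((WithLp.linearEquiv 2 ℝ (Fin m → ℝ)).symm :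
          (Fin m → ℝ) →ₗ[ℝ] EuclideanSpace ℝ (Fin m)) := by
    ext w
    constructor
    · rintro ⟨c, rfl⟩
      exact ⟨X *ᵥ (WithLp.equiv 2 (Fin n → ℝ) c), ⟨_, rfl⟩, rfl⟩
    · rintro ⟨y, ⟨c, rfl⟩, rfl⟩
      exact ⟨(WithLp.equiv 2 (Fin n → ℝ)).symm c, rfl⟩
  rw [h, LinearEquiv.finrank_map_eq]

lemma colSpace_mul_le {m n k : ℕ} (X : Matrix (Fin m) (Fin n) ℝ) (P : Matrix (Fin n) (Fin k) ℝ) :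
    colSpace (X * P) ≤ colSpace X := by
  rintro w ⟨c, rfl⟩
  refine ⟨toEuclideanLin P c, ?_⟩
  show (WithLp.equiv 2 (Fin m → ℝ)).symm _ = (WithLp.equiv 2 (Fin m → ℝ)).symm _
  congr 1
  simp [Matrix.mulVec_mulVec]

lemma projMat_colSpace {m k : ℕ} (A : Matrix (Fin m) (Fin k) ℝ) (hA : IsUnit (Aᵀ * A).det) :
    projMat (colSpace A) = A * (Aᵀ * A)⁻¹ * Aᵀ := by
  have hAtQ : Aᵀ * (A * (Aᵀ * A)⁻¹ * Aᵀ) = Aᵀ := by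
    simp only [← Matrix.mul_assoc]
    rw [Matrix.mul_nonsing_inv _ hA, Matrix.one_mul]
  have key : ∀ v : EuclideanSpace ℝ (Fin m),
      (Submodule.orthogonalProjectionOnto (colSpace A) v : EuclideanSpace ℝ (Fin m))
        = (WithLp.equiv 2 (Fin m → ℝ)).symm
            ((A * (Aᵀ * A)⁻¹ * Aᵀ) *ᵥ (WithLp.equiv 2 (Fin m → ℝ) v)) := by
    intro v
    rw [← Submodule.starProjection_apply]
    apply Submodule.eq_starProjection_of_mem_of_inner_eq_zero
    · refine ⟨(WithLp.equiv 2 (Fin k → ℝ)).symm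
        ((((Aᵀ * A)⁻¹ * Aᵀ)) *ᵥ (WithLp.equiv 2 (Fin m → ℝ) v)), ?_⟩
      rw [WithLp.equiv_symm_apply, toEuclideanLin_apply_piLp_toLp, Matrix.mulVec_mulVec, ← Matrix.mul_assoc]
      rfl
    · rintro w ⟨c, rfl⟩
      set u := (WithLp.equiv 2 (Fin m → ℝ)) v with hu
      set cc := (WithLp.equiv 2 (Fin k → ℝ)) c with hcc
      have h1 : (inner ℝ (v - (WithLp.equiv 2 (Fin m → ℝ)).symm ((A * (Aᵀ * A)⁻¹ * Aᵀ) *ᵥ u))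
          ((toEuclideanLin A) c) : ℝ)
          = (Aᵀ *ᵥ (u - (A * (Aᵀ * A)⁻¹ * Aᵀ) *ᵥ u)) ⬝ᵥ cc := by
        rw [Matrix.mulVec_transpose, ← Matrix.dotProduct_mulVec]
        simp only [PiLp.inner_apply, RCLike.inner_apply, conj_trivial]
        exact Finset.sum_congr rfl fun x _ => mul_comm _ _
      rw [h1, Matrix.mulVec_sub, Matrix.mulVec_mulVec, hAtQ, sub_self]
      simp
  funext i j
  show (Submodule.orthogonalProjectionOnto (colSpace A) (EuclideanSpace.single j 1) :
    EuclideanSpace ℝ (Fin m)) i = _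
  rw [key]
  show ((A * (Aᵀ * A)⁻¹ * Aᵀ) *ᵥ (Pi.single j 1)) i = _
  rw [Matrix.mulVec_single]
  exact mul_one _

lemma isUnit_det_AtA {m k : ℕ} (A : Matrix (Fin m) (Fin k) ℝ)
    (h : Function.Injective A.mulVec) : IsUnit (Aᵀ * A).det := by
  rw [← Matrix.isUnit_iff_isUnit_det, ← Matrix.mulVec_injective_iff_isUnit]
  intro c₁ c₂ hc
  apply h
  have hd : (Aᵀ * A) *ᵥ (c₁ - c₂) = 0 := by
    rw [Matrix.mulVec_sub, hc, sub_self]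
  have hz : (A *ᵥ (c₁ - c₂)) ⬝ᵥ (A *ᵥ (c₁ - c₂)) = 0 := by
    rw [Matrix.dotProduct_mulVec, ← Matrix.mulVec_transpose, Matrix.mulVec_mulVec, hd,
      zero_dotProduct]
  have h0 : A *ᵥ (c₁ - c₂) = 0 := dotProduct_self_eq_zero.mp hz
  rw [Matrix.mulVec_sub, sub_eq_zero] at h0
  exact h0

lemma mulVec_injective_of_isUnit_det {m k : ℕ} (A : Matrix (Fin m) (Fin k) ℝ)
    (hA : IsUnit (Aᵀ * A).det) : Function.Injective A.mulVec := by
  have h := Matrix.mulVec_injective_iff_isUnit.mpr ((Matrix.isUnit_iff_isUnit_det _).mpr hA)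
  intro c₁ c₂ hc
  apply h
  rw [← Matrix.mulVec_mulVec, hc, Matrix.mulVec_mulVec]

lemma finrank_colSpace_of_inj {m k : ℕ} (A : Matrix (Fin m) (Fin k) ℝ)
    (h : Function.Injective A.mulVec) : Module.finrank ℝ (colSpace A) = k := by
  have hinj : Function.Injective (toEuclideanLin A) := by
    intro x y hxy
    have h2 := congrArg (WithLp.equiv 2 (Fin m → ℝ)) hxy
    simp only [WithLp.equiv_apply, piLp_ofLp_toEuclideanLin] at h2
    have h3 := h (by simpa [Matrix.toLin'_apply] using h2)
    exact (WithLp.equiv 2 (Fin k → ℝ)).injective h3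
  rw [colSpace, LinearMap.finrank_range_of_inj hinj, finrank_euclideanSpace_fin]

lemma exists_P {m n k : ℕ} (Xbar : Matrix (Fin m) (Fin n) ℝ) (hrank : Xbar.rank = k) :
    ∃ P : Matrix (Fin n) (Fin k) ℝ, Function.Injective (Xbar * P).mulVec := by
  have hfr : Module.finrank ℝ (LinearMap.range Xbar.mulVecLin) = k := hrank
  have hfr2 : Module.finrank ℝ (Fin k → ℝ)
      = Module.finrank ℝ (LinearMap.range Xbar.mulVecLin) := by simp [hfr]
  let e : (Fin k → ℝ) ≃ₗ[ℝ] LinearMap.range Xbar.mulVecLin := LinearEquiv.ofFinrankEq _ _ hfr2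
  obtain ⟨w, hw⟩ := Module.projective_lifting_property Xbar.mulVecLin.rangeRestrict
    e.toLinearMap (LinearMap.surjective_rangeRestrict _)
  refine ⟨LinearMap.toMatrix' w, fun c₁ c₂ hc => ?_⟩
  have key : ∀ c, (Xbar * LinearMap.toMatrix' w) *ᵥ c = (e c : Fin m → ℝ) := by
    intro c
    rw [← Matrix.mulVec_mulVec]
    have h1 : (LinearMap.toMatrix' w) *ᵥ c = w c := by
      rw [← Matrix.toLin'_apply, Matrix.toLin'_toMatrix']
    rw [h1]
    have h2 : Xbar *ᵥ (w c) = (Xbar.mulVecLin.rangeRestrict (w c) : Fin m → ℝ) := rfl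
    rw [h2, ← LinearMap.comp_apply, hw]
    rfl
  rw [key, key] at hc
  exact e.injective (Subtype.ext hc)

section diff
variable {E : Type*} [NormedAddCommGroup E] [NormedSpace ℝ E]

lemma diffAt_detf {a : ℕ} {f : E → Matrix (Fin a) (Fin a) ℝ} {x : E}
    (hf : ∀ i j, DifferentiableAt ℝ (fun y => f y i j) x) :
    DifferentiableAt ℝ (fun y => (f y).det) x := by
  simp only [Matrix.det_apply']
  refine DifferentiableAt.fun_sum fun σ _ => DifferentiableAt.const_mul ?_ _
  exact (HasFDerivAt.finset_prod fun i _ => (hf (σ i) i).hasFDerivAt).differentiableAt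

lemma diffAt_mulf {a b c : ℕ} {f : E → Matrix (Fin a) (Fin b) ℝ}
    {g : E → Matrix (Fin b) (Fin c) ℝ} {x : E}
    (hf : ∀ i j, DifferentiableAt ℝ (fun y => f y i j) x)
    (hg : ∀ i j, DifferentiableAt ℝ (fun y => g y i j) x) :
    ∀ i j, DifferentiableAt ℝ (fun y => (f y * g y) i j) x := by
  intro i j
  simp only [Matrix.mul_apply]
  exact DifferentiableAt.fun_sum fun l _ => (hf i l).mul (hg l j)

lemma diffAt_adjugatef {a : ℕ} {f : E → Matrix (Fin a) (Fin a) ℝ} {x : E}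
    (hf : ∀ i j, DifferentiableAt ℝ (fun y => f y i j) x) :
    ∀ i j, DifferentiableAt ℝ (fun y => (f y).adjugate i j) x := by
  intro i j
  simp only [Matrix.adjugate_apply]
  apply diffAt_detf
  intro a b
  simp only [Matrix.updateRow_apply]
  by_cases ha : a = j <;> simp [ha, hf]

end diff

/-- The coordinate function on matrices, as a linear map. -/
noncomputable def entryL {a b : ℕ} (i : Fin a) (j : Fin b) :
    Matrix (Fin a) (Fin b) ℝ →ₗ[ℝ] ℝ where
  toFun X := X i j
  map_add' _ _ := rfl
  map_smul' _ _ := rfl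

/-- The identity between pi-type functions and matrices, as a linear map. -/
noncomputable def matL {a b : ℕ} : (Fin a → Fin b → ℝ) →ₗ[ℝ] Matrix (Fin a) (Fin b) ℝ where
  toFun f := Matrix.of f
  map_add' _ _ := rfl
  map_smul' _ _ := rfl

lemma colMain {m n k : ℕ} (Xbar : Matrix (Fin m) (Fin n) ℝ) (hrank : Xbar.rank = k) :
    ∃ ε > (0:ℝ), ∃ L > (0:ℝ), ∀ X : Matrix (Fin m) (Fin n) ℝ, X.rank = k →
      fnorm (X - Xbar) < ε →
      fnorm (projMat (colSpace X) - projMat (colSpace Xbar)) ≤ L * fnorm (X - Xbar) := by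
  obtain ⟨P, hPinj⟩ := exists_P Xbar hrank
  set d : Matrix (Fin m) (Fin n) ℝ → ℝ := fun X => ((X * P)ᵀ * (X * P)).det with hd_def
  set Nm : Matrix (Fin m) (Fin n) ℝ → Matrix (Fin m) (Fin m) ℝ :=
    fun X => (X * P) * ((X * P)ᵀ * (X * P)).adjugate * (X * P)ᵀ with hNm_def
  set H : Matrix (Fin m) (Fin n) ℝ → Matrix (Fin m) (Fin m) ℝ :=
    fun X => (d X)⁻¹ • Nm X with hH_def
  have hdbar : d Xbar ≠ 0 := (isUnit_det_AtA _ hPinj).ne_zero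
  -- differentiability of the entries
  have hXP : ∀ i j, DifferentiableAt ℝ (fun Y : Matrix (Fin m) (Fin n) ℝ => (Y * P) i j) Xbar := by
    intro i j
    simp only [Matrix.mul_apply]
    refine DifferentiableAt.fun_sum fun l _ => DifferentiableAt.mul_const ?_ _
    exact (entryL i l).toContinuousLinearMap.differentiableAt
  have hXPt : ∀ i j, DifferentiableAt ℝ (fun Y : Matrix (Fin m) (Fin n) ℝ => (Y * P)ᵀ i j) Xbar :=
    fun i j => hXP j i
  have hAtA : ∀ i j, DifferentiableAt ℝ
      (fun Y : Matrix (Fin m) (Fin n) ℝ => ((Y * P)ᵀ * (Y * P)) i j) Xbar :=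
    diffAt_mulf hXPt hXP
  have hd_diff : DifferentiableAt ℝ d Xbar := diffAt_detf hAtA
  have hNm_diff : ∀ i j, DifferentiableAt ℝ (fun Y => Nm Y i j) Xbar :=
    diffAt_mulf (diffAt_mulf hXP (diffAt_adjugatef hAtA)) hXPt
  have hH_diff : DifferentiableAt ℝ H Xbar := by
    have hpi : DifferentiableAt ℝ
        (fun Y : Matrix (Fin m) (Fin n) ℝ => (fun i j => (d Y)⁻¹ * Nm Y i j)) Xbar :=
      differentiableAt_pi.mpr fun i => differentiableAt_pi.mpr fun j =>
        ((hd_diff.inv hdbar).mul (hNm_diff i j))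
    exact (matL.toContinuousLinearMap.differentiableAt).comp Xbar hpi
  -- projMat formula on the good set
  have hproj : ∀ X : Matrix (Fin m) (Fin n) ℝ, X.rank = k → d X ≠ 0 →
      projMat (colSpace X) = H X := by
    intro X hX hdX
    have hU : IsUnit ((X * P)ᵀ * (X * P)).det := isUnit_iff_ne_zero.mpr hdX
    have hinj : Function.Injective (X * P).mulVec := mulVec_injective_of_isUnit_det _ hU
    have hcs : colSpace (X * P) = colSpace X := by
      apply Submodule.eq_of_le_of_finrank_le (colSpace_mul_le X P)
      rw [finrank_colSpace_eq_rank X, hX, finrank_colSpace_of_inj _ hinj]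
    rw [← hcs, projMat_colSpace _ hU, Matrix.inv_def, Ring.inverse_eq_inv']
    rw [hH_def, hNm_def, hd_def]
    rw [Matrix.mul_smul, Matrix.smul_mul]
  -- the bound
  obtain ⟨C, hC⟩ := (hH_diff.hasFDerivAt.isBigO_sub).bound
  have hev := hC.and (hd_diff.continuousAt.eventually_ne hdbar)
  rw [Metric.eventually_nhds_iff] at hev
  obtain ⟨ε, hε, hball⟩ := hev
  refine ⟨ε, hε, max C 1, lt_of_lt_of_le one_pos (le_max_right _ _), fun X hX hlt => ?_⟩
  have hb := hball (show dist X Xbar < ε by rw [dist_eq_norm, ← fnorm_eq_norm]; exact hlt)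
  rw [hproj X hX hb.2, hproj Xbar hrank hdbar, fnorm_eq_norm, fnorm_eq_norm]
  calc ‖H X - H Xbar‖ ≤ C * ‖X - Xbar‖ := hb.1
    _ ≤ max C 1 * ‖X - Xbar‖ :=
      mul_le_mul_of_nonneg_right (le_max_left _ _) (norm_nonneg _)

/-- Near a rank-`k` matrix `X̄`, the orthogonal projectors onto the row and
column spaces of rank-`k` matrices `X` depend Lipschitz-continuously on `X`. -/
theorem stmt15 {m n k : ℕ} (Xbar : Matrix (Fin m) (Fin n) ℝ) (hrank : Xbar.rank = k) :
    ∃ ε > (0 : ℝ), ∃ L > (0 : ℝ), ∀ X : Matrix (Fin m) (Fin n) ℝ,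
      X.rank = k → fnorm (X - Xbar) < ε →
        fnorm (projMat (rowSpace X) - projMat (rowSpace Xbar)) ≤ L * fnorm (X - Xbar) ∧
        fnorm (projMat (colSpace X) - projMat (colSpace Xbar)) ≤ L * fnorm (X - Xbar) := by
  obtain ⟨ε₁, hε₁, L₁, hL₁, h₁⟩ := colMain Xbarᵀ (by rw [Matrix.rank_transpose, hrank])
  obtain ⟨ε₂, hε₂, L₂, hL₂, h₂⟩ := colMain Xbar hrank
  refine ⟨min ε₁ ε₂, lt_min hε₁ hε₂, max L₁ L₂, lt_of_lt_of_le hL₁ (le_max_left _ _),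
    fun X hX hlt => ?_⟩
  have hTd : Xᵀ - Xbarᵀ = (X - Xbar)ᵀ := (Matrix.transpose_sub _ _).symm
  have hfT : fnorm (Xᵀ - Xbarᵀ) = fnorm (X - Xbar) := by rw [hTd, fnorm_transpose]
  constructor
  · have := h₁ Xᵀ (by rw [Matrix.rank_transpose, hX]) (by rw [hfT]; exact hlt.trans_le (min_le_left _ _))
    rw [hfT] at this
    exact this.trans (mul_le_mul_of_nonneg_right (le_max_left _ _) (fnorm_eq_norm _ ▸ norm_nonneg _))
  · have := h₂ X hX (hlt.trans_le (min_le_right _ _))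
    exact this.trans (mul_le_mul_of_nonneg_right (le_max_right _ _) (fnorm_eq_norm _ ▸ norm_nonneg _))
end

section
/- Let A_1 ∈ ℝ^{m×m} and A_2 ∈ ℝ^{n×n} be symmetric positive definite, B ∈ ℝ^{m×n}, and define f : ℝ^{m×n} → ℝ by f(X) = ½ tr(Xᵀ A_1 X A_2) − tr(Xᵀ B). Set C = A_1^{-1/2} B A_2^{-1/2}. Then for every k, a matrix X̄ with rank(X̄) ≤ k minimizes f over {X : rank(X) ≤ k} if and only if Ȳ = A_1^{1/2} X̄ A_2^{1/2} minimizes Y ↦ ‖Y − C‖_F over {Y : rank(Y) ≤ k}; in particular X ↦ A_1^{1/2} X A_2^{1/2} is a rank-preserving bijection between the two sets of minimizers, and f(X) = ½‖A_1^{1/2} X A_2^{1/2} − C‖_F² − ½‖C‖_F². -/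
open Matrix

/-- For the quadratic cost `f(X) = ½ tr(Xᵀ A₁ X A₂) - tr(Xᵀ B)` with symmetric
positive definite `A₁, A₂` (square roots `R₁, R₂`) and `C = A₁^{-1/2} B A₂^{-1/2}`:
`f(X) = ½‖R₁ X R₂ - C‖_F² - ½‖C‖_F²`, the map `X ↦ R₁ X R₂` preserves rank, and `X̄` of rank
`≤ k` minimizes `f` over `{rank ≤ k}` iff `R₁ X̄ R₂` minimizes `Y ↦ ‖Y - C‖_F` over
`{rank ≤ k}`. -/
theorem stmt18 {m n : ℕ}
    (A₁ R₁ : Matrix (Fin m) (Fin m) ℝ) (A₂ R₂ : Matrix (Fin n) (Fin n) ℝ)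
    (hA₁ : A₁.PosDef) (hA₂ : A₂.PosDef)
    (hR₁ : R₁.PosSemidef) (hR₂ : R₂.PosSemidef)
    (hR₁R₁ : R₁ * R₁ = A₁) (hR₂R₂ : R₂ * R₂ = A₂)
    (B C : Matrix (Fin m) (Fin n) ℝ) (hC : C = R₁⁻¹ * B * R₂⁻¹)
    (f : Matrix (Fin m) (Fin n) ℝ → ℝ)
    (hf : ∀ X, f X = (1/2) * Matrix.trace (Xᵀ * A₁ * X * A₂) - Matrix.trace (Xᵀ * B)) :
    (∀ X, f X = (1/2) * fnorm (R₁ * X * R₂ - C) ^ 2 - (1/2) * fnorm C ^ 2) ∧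
      (∀ X : Matrix (Fin m) (Fin n) ℝ, (R₁ * X * R₂).rank = X.rank) ∧
      (∀ k : ℕ, ∀ Xbar : Matrix (Fin m) (Fin n) ℝ, Xbar.rank ≤ k →
        ((∀ Y : Matrix (Fin m) (Fin n) ℝ, Y.rank ≤ k → f Xbar ≤ f Y) ↔
          (∀ Y : Matrix (Fin m) (Fin n) ℝ, Y.rank ≤ k →
            fnorm (R₁ * Xbar * R₂ - C) ≤ fnorm (Y - C)))) := by
  have hR₁t : R₁ᵀ = R₁ := by
    have h := hR₁.isHermitian; rw [Matrix.IsHermitian] at h; simpa using h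
  have hR₂t : R₂ᵀ = R₂ := by
    have h := hR₂.isHermitian; rw [Matrix.IsHermitian] at h; simpa using h
  have hdet₁ : IsUnit R₁.det := by
    have h1 : R₁.det * R₁.det = A₁.det := by rw [← Matrix.det_mul, hR₁R₁]
    have h2 := hA₁.det_pos
    refine isUnit_iff_ne_zero.mpr fun h => ?_
    rw [h, mul_zero] at h1
    exact absurd h1.symm (ne_of_gt h2)
  have hdet₂ : IsUnit R₂.det := by
    have h1 : R₂.det * R₂.det = A₂.det := by rw [← Matrix.det_mul, hR₂R₂]
    have h2 := hA₂.det_pos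
    refine isUnit_iff_ne_zero.mpr fun h => ?_
    rw [h, mul_zero] at h1
    exact absurd h1.symm (ne_of_gt h2)
  have hdet₁' : IsUnit R₁⁻¹.det := Matrix.isUnit_nonsing_inv_det _ hdet₁
  have hdet₂' : IsUnit R₂⁻¹.det := Matrix.isUnit_nonsing_inv_det _ hdet₂
  have hfnn : ∀ (X : Matrix (Fin m) (Fin n) ℝ), 0 ≤ fnorm X := fun X => Real.sqrt_nonneg _
  have hfn : ∀ (X : Matrix (Fin m) (Fin n) ℝ), fnorm X ^ 2 = Matrix.trace (Xᵀ * X) := by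
    intro X
    have h0 : (0:ℝ) ≤ ∑ i, ∑ j, (X i j)^2 :=
      Finset.sum_nonneg fun i _ => Finset.sum_nonneg fun j _ => sq_nonneg _
    rw [fnorm, Real.sq_sqrt h0]
    simp only [Matrix.trace, Matrix.diag, Matrix.mul_apply, Matrix.transpose_apply, sq]
    exact Finset.sum_comm
  have hmid : R₁ * C * R₂ = B := by
    rw [hC, Matrix.mul_assoc R₁⁻¹ B R₂⁻¹, Matrix.mul_nonsing_inv_cancel_left _ _ hdet₁,
      Matrix.nonsing_inv_mul_cancel_right _ _ hdet₂]
  have e2 : ∀ X : Matrix (Fin m) (Fin n) ℝ,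
      Matrix.trace ((R₁ * X * R₂)ᵀ * C) = Matrix.trace (Xᵀ * B) := by
    intro X
    rw [Matrix.transpose_mul, Matrix.transpose_mul, hR₁t, hR₂t, Matrix.mul_assoc,
      Matrix.trace_mul_comm R₂, Matrix.mul_assoc Xᵀ R₁ C, Matrix.mul_assoc Xᵀ (R₁ * C) R₂, hmid]
  have e3 : ∀ X : Matrix (Fin m) (Fin n) ℝ,
      Matrix.trace (Cᵀ * (R₁ * X * R₂)) = Matrix.trace (Xᵀ * B) := by
    intro X
    rw [← Matrix.trace_transpose, Matrix.transpose_mul, Matrix.transpose_transpose]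
    exact e2 X
  have e1 : ∀ X : Matrix (Fin m) (Fin n) ℝ,
      Matrix.trace ((R₁ * X * R₂)ᵀ * (R₁ * X * R₂)) = Matrix.trace (Xᵀ * A₁ * X * A₂) := by
    intro X
    rw [Matrix.transpose_mul, Matrix.transpose_mul, hR₁t, hR₂t, Matrix.mul_assoc,
      Matrix.trace_mul_comm R₂]
    simp only [← Matrix.mul_assoc]
    rw [Matrix.mul_assoc Xᵀ R₁ R₁, hR₁R₁, Matrix.mul_assoc (Xᵀ * A₁ * X) R₂ R₂, hR₂R₂]
  have hkey : ∀ X : Matrix (Fin m) (Fin n) ℝ,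
      Matrix.trace ((R₁ * X * R₂ - C)ᵀ * (R₁ * X * R₂ - C)) =
        Matrix.trace (Xᵀ * A₁ * X * A₂) - 2 * Matrix.trace (Xᵀ * B)
          + Matrix.trace (Cᵀ * C) := by
    intro X
    rw [Matrix.transpose_sub, Matrix.sub_mul, Matrix.mul_sub, Matrix.mul_sub,
      Matrix.trace_sub, Matrix.trace_sub, Matrix.trace_sub, e1, e2, e3]
    ring
  have part1 : ∀ X, f X = (1/2) * fnorm (R₁ * X * R₂ - C) ^ 2 - (1/2) * fnorm C ^ 2 := by
    intro X
    rw [hf, hfn, hfn, hkey]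
    ring
  have part2 : ∀ X : Matrix (Fin m) (Fin n) ℝ, (R₁ * X * R₂).rank = X.rank := by
    intro X
    rw [Matrix.rank_mul_eq_left_of_isUnit_det R₂ (R₁ * X) hdet₂,
      Matrix.rank_mul_eq_right_of_isUnit_det R₁ X hdet₁]
  refine ⟨part1, part2, fun k Xbar _ => ?_⟩
  constructor
  · intro h Y hY
    have hY' : (R₁⁻¹ * Y * R₂⁻¹).rank ≤ k := by
      rwa [Matrix.rank_mul_eq_left_of_isUnit_det R₂⁻¹ (R₁⁻¹ * Y) hdet₂',
        Matrix.rank_mul_eq_right_of_isUnit_det R₁⁻¹ Y hdet₁']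
    have hYY : R₁ * (R₁⁻¹ * Y * R₂⁻¹) * R₂ = Y := by
      rw [Matrix.mul_assoc R₁⁻¹ Y R₂⁻¹, Matrix.mul_nonsing_inv_cancel_left _ _ hdet₁,
        Matrix.nonsing_inv_mul_cancel_right _ _ hdet₂]
    have h2 := h _ hY'
    rw [part1, part1, hYY] at h2
    nlinarith [hfnn (R₁ * Xbar * R₂ - C), hfnn (Y - C)]
  · intro h Y hY
    have hY' : (R₁ * Y * R₂).rank ≤ k := by rw [part2]; exact hY
    have h2 := h _ hY'
    rw [part1, part1]
    nlinarith [hfnn (R₁ * Xbar * R₂ - C), hfnn (R₁ * Y * R₂ - C)]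
end
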